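/- arXiv:2109.13041 — 6 statements merged into one kernel-verified Lean document; each statement's English description precedes it below -/
import Mathlib

section
/- Let m, ρ, R, q > 0 and set f_cr = |q|·R·√(ρm/(2π)). If 0 < f < f_cr, then U'(s) > 0 for all s > R, where U(s) = f²/(2ms²) + (ρq²/(4π))·ln(1 − R²/s²); i.e., U is strictly monotonically increasing on (R, ∞). -/
open Real Set

theorem effective_potential_strict_mono_subcritical
    (m ρ R q f : ℝ) (hm : 0 < m) (hρ : 0 < ρ) (hR : 0 < R) (hq : 0 < q)
    (hf : 0 < f) (hfcr : f < |q| * R * Real.sqrt (ρ * m / (2*π))) :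
    (∀ s ∈ Set.Ioi R,
      0 < deriv (fun s : ℝ => f^2 / (2*m*s^2) + (ρ*q^2/(4*π)) * Real.log (1 - R^2/s^2)) s) ∧
    StrictMonoOn (fun s : ℝ => f^2 / (2*m*s^2) + (ρ*q^2/(4*π)) * Real.log (1 - R^2/s^2))
      (Set.Ioi R) := by
  have hπ : (0:ℝ) < π := Real.pi_pos
  have hq' : |q| = q := abs_of_pos hq
  have hf2 : f^2 < q^2 * R^2 * (ρ * m / (2*π)) := by
    have hx : (0:ℝ) ≤ ρ * m / (2*π) := by positivity
    have h := mul_self_lt_mul_self hf.le hfcr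
    rw [hq'] at h
    calc f^2 = f*f := sq f
    _ < (q*R*Real.sqrt (ρ*m/(2*π))) * (q*R*Real.sqrt (ρ*m/(2*π))) := h
    _ = q^2*R^2*(Real.sqrt (ρ*m/(2*π)) * Real.sqrt (ρ*m/(2*π))) := by ring
    _ = q^2*R^2*(ρ*m/(2*π)) := by rw [Real.mul_self_sqrt hx]
  have key : ∀ s ∈ Set.Ioi R, HasDerivAt
      (fun s : ℝ => f^2 / (2*m*s^2) + (ρ*q^2/(4*π)) * Real.log (1 - R^2/s^2))
      (-(f^2/(m*s^3)) + ρ*q^2*R^2/(2*π*s*(s^2-R^2))) s := by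
    intro s hs
    rw [Set.mem_Ioi] at hs
    have hs0 : 0 < s := hR.trans hs
    have hs2 : (0:ℝ) < s^2 - R^2 := by nlinarith
    have hinner : (0:ℝ) < 1 - R^2/s^2 := by
      rw [sub_pos, div_lt_one (by positivity)]
      nlinarith
    have h1 : HasDerivAt (fun s : ℝ => f^2 / (2*m*s^2))
        ((0*(2*m*s^2) - f^2*(2*m*(2*s^1)))/(2*m*s^2)^2) s :=
      (hasDerivAt_const s (f^2)).div ((hasDerivAt_pow 2 s).const_mul (2*m)) (by positivity)
    have hg : HasDerivAt (fun s : ℝ => 1 - R^2/s^2)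
        (0 - (0*s^2 - R^2*(2*s^1))/(s^2)^2) s :=
      (hasDerivAt_const s 1).sub
        ((hasDerivAt_const s (R^2)).div (hasDerivAt_pow 2 s) (by positivity))
    have h2 := (hg.log (ne_of_gt hinner)).const_mul (ρ*q^2/(4*π))
    have h3 := h1.add h2
    refine h3.congr_deriv ?_
    have hm' : m ≠ 0 := ne_of_gt hm
    have hs' : s ≠ 0 := ne_of_gt hs0
    have hπ' : π ≠ 0 := ne_of_gt hπ
    have hs2' : s^2 - R^2 ≠ 0 := ne_of_gt hs2
    have hinner' : 1 - R^2/s^2 ≠ 0 := ne_of_gt hinner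
    field_simp
    ring
  have pos : ∀ s ∈ Set.Ioi R, 0 < deriv
      (fun s : ℝ => f^2 / (2*m*s^2) + (ρ*q^2/(4*π)) * Real.log (1 - R^2/s^2)) s := by
    intro s hs
    rw [(key s hs).deriv]
    rw [Set.mem_Ioi] at hs
    have hs0 : 0 < s := hR.trans hs
    have hs2 : (0:ℝ) < s^2 - R^2 := by nlinarith
    rw [neg_add_eq_sub, sub_pos, div_lt_div_iff₀ (by positivity) (by positivity)]
    have hf2' : f^2 < q^2*R^2*(ρ*m)/(2*π) := by rw [mul_div_assoc]; exact hf2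
    have h1 : f^2 * (2*π) < q^2*R^2*(ρ*m) := (lt_div_iff₀ (by positivity)).mp hf2'
    have h4 := mul_lt_mul_of_pos_right h1 (mul_pos hs0 hs2)
    have h5 : (0:ℝ) < q^2*R^2*(ρ*m)*(s*R^2) := by positivity
    nlinarith [h4, h5]
  refine ⟨pos, ?_⟩
  have hconv : Convex ℝ (Set.Ioi R) := convex_Ioi R
  refine strictMonoOn_of_deriv_pos hconv
    (fun x hx => ((key x hx).differentiableAt.continuousAt.continuousWithinAt)) ?_
  intro x hx
  rw [interior_Ioi] at hx
  exact pos x hx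
end

section
/- For the Hamiltonian H(X, Y, Θ, Px, Py, Pθ) given below, the quantity K = Pθ + Py·X − Px·Y is a first integral of the canonical Hamiltonian equations: its Poisson bracket with H vanishes, i.e., {K, H} = 0. -/
open Real Matrix
set_option maxHeartbeats 1000000

noncomputable def Fham (a b c k κ Rr : ℝ) (x y θ px py pθ : ℝ) : ℝ :=
  (1/2)*(((a*c-b^2*(Real.cos θ)^2)*(px + k*x/(x^2+y^2))^2
   + (a*c-b^2*(Real.sin θ)^2)*(py + k*y/(x^2+y^2))^2
   + a^2*pθ^2
   - 2*b^2*Real.sin θ*Real.cos θ*(px + k*x/(x^2+y^2))*(py + k*y/(x^2+y^2))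
   + 2*a*b*Real.sin θ*(px + k*x/(x^2+y^2))*pθ
   - 2*a*b*Real.cos θ*(py + k*y/(x^2+y^2))*pθ) / (a*c-b^2) / a)
  - κ*(Real.log (x^2+y^2) - Real.log (x^2+y^2 - Rr^2))

lemma Qinv_aux (a m dd c θ : ℝ) (ha : a ≠ 0) (hk : a*c - (m*dd)^2 ≠ 0) :
    (!![a, 0, -m*dd*Real.sin θ; 0, a, m*dd*Real.cos θ; -m*dd*Real.sin θ, m*dd*Real.cos θ, c])⁻¹
    = (a*(a*c-(m*dd)^2))⁻¹ • !![a*c-(m*dd)^2*(Real.cos θ)^2, -((m*dd)^2*Real.sin θ*Real.cos θ), a*(m*dd)*Real.sin θ;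
        -((m*dd)^2*Real.sin θ*Real.cos θ), a*c-(m*dd)^2*(Real.sin θ)^2, -(a*(m*dd)*Real.cos θ);
        a*(m*dd)*Real.sin θ, -(a*(m*dd)*Real.cos θ), a^2] := by
  apply Matrix.inv_eq_right_inv
  have hD : a*(a*c-(m*dd)^2) ≠ 0 := mul_ne_zero ha hk
  have hp := Real.sin_sq_add_cos_sq θ
  have hk' : a*c - m^2*dd^2 ≠ 0 := by rwa [mul_pow] at hk
  ext i j
  fin_cases i <;> fin_cases j <;>
    simp [Matrix.mul_apply, Fin.sum_univ_three, Matrix.one_apply] <;>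
    field_simp <;>
    first
    | ring1
    | linear_combination (-(a*(m*dd)^2))*hp
    | linear_combination (-(a^3*(m*dd)^2)*(a*c-(m*dd)^2)^2)*hp
    | linear_combination (-(a^2*(m*dd)^3)*Real.sin θ*(a*c-(m*dd)^2)^2)*hp
    | linear_combination (-(a^2*(m*dd)^3)*Real.cos θ*(a*c-(m*dd)^2)^2)*hp
    | linear_combination ((a^2*(m*dd)^3)*Real.sin θ*(a*c-(m*dd)^2)^2)*hp
    | linear_combination ((a^2*(m*dd)^3)*Real.cos θ*(a*c-(m*dd)^2)^2)*hp
    | linear_combination (-(m*dd)^2)*hp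

lemma Fham_deriv_px (a b c k κ Rr x y θ px py pθ : ℝ) :
    deriv (fun t => Fham a b c k κ Rr x y θ t py pθ) px
      = ((a*c-b^2*(Real.cos θ)^2)*(px + k*x/(x^2+y^2))
         - b^2*Real.sin θ*Real.cos θ*(py + k*y/(x^2+y^2))
         + a*b*Real.sin θ*pθ) / (a*c-b^2) / a := by
  have hu : HasDerivAt (fun t : ℝ => t + k*x/(x^2+y^2)) 1 px := (hasDerivAt_id px).add_const _
  have h : HasDerivAt (fun t => Fham a b c k κ Rr x y θ t py pθ)
      ((1/2)*((((a*c-b^2*(Real.cos θ)^2)*(2*(px + k*x/(x^2+y^2))^1*1)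
        + 0 + 0
        - (2*b^2*Real.sin θ*Real.cos θ*1)*(py + k*y/(x^2+y^2))
        + (2*a*b*Real.sin θ*1)*pθ
        - 0)) / (a*c-b^2) / a) - 0) px := by
    unfold Fham
    exact (((((((hu.pow 2).const_mul (a*c-b^2*(Real.cos θ)^2)).add
      (hasDerivAt_const _ _)).add (hasDerivAt_const _ _)).sub
      ((hu.const_mul (2*b^2*Real.sin θ*Real.cos θ)).mul_const _)).add
      ((hu.const_mul (2*a*b*Real.sin θ)).mul_const _)).sub
      (hasDerivAt_const _ _)).div_const (a*c-b^2) |>.div_const a |>.const_mul (1/2) |>.sub (hasDerivAt_const _ _)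
  rw [h.deriv]; ring

lemma Fham_deriv_py (a b c k κ Rr x y θ px py pθ : ℝ) :
    deriv (fun t => Fham a b c k κ Rr x y θ px t pθ) py
      = ((a*c-b^2*(Real.sin θ)^2)*(py + k*y/(x^2+y^2))
         - b^2*Real.sin θ*Real.cos θ*(px + k*x/(x^2+y^2))
         - a*b*Real.cos θ*pθ) / (a*c-b^2) / a := by
  have hv : HasDerivAt (fun t : ℝ => t + k*y/(x^2+y^2)) 1 py := (hasDerivAt_id py).add_const _
  have h : HasDerivAt (fun t => Fham a b c k κ Rr x y θ px t pθ)
      ((1/2)*(((0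
        + (a*c-b^2*(Real.sin θ)^2)*(2*(py + k*y/(x^2+y^2))^1*1)
        + 0
        - (2*b^2*Real.sin θ*Real.cos θ*(px + k*x/(x^2+y^2))*1)
        + 0
        - (2*a*b*Real.cos θ*1)*pθ)) / (a*c-b^2) / a) - 0) py := by
    unfold Fham
    exact ((((((hasDerivAt_const _ _).add
      ((hv.pow 2).const_mul (a*c-b^2*(Real.sin θ)^2))).add (hasDerivAt_const _ _)).sub
      (hv.const_mul (2*b^2*Real.sin θ*Real.cos θ*(px + k*x/(x^2+y^2))))).add
      (hasDerivAt_const _ _)).sub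
      ((hv.const_mul (2*a*b*Real.cos θ)).mul_const _)).div_const (a*c-b^2) |>.div_const a |>.const_mul (1/2) |>.sub (hasDerivAt_const _ _)
  rw [h.deriv]; ring

lemma Fham_deriv_θ (a b c k κ Rr x y θ px py pθ : ℝ) :
    deriv (fun t => Fham a b c k κ Rr x y t px py pθ) θ
      = (b^2*Real.sin θ*Real.cos θ*((px + k*x/(x^2+y^2))^2 - (py + k*y/(x^2+y^2))^2)
         - b^2*((Real.cos θ)^2-(Real.sin θ)^2)*(px + k*x/(x^2+y^2))*(py + k*y/(x^2+y^2))
         + a*b*Real.cos θ*(px + k*x/(x^2+y^2))*pθ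
         + a*b*Real.sin θ*(py + k*y/(x^2+y^2))*pθ) / (a*c-b^2) / a := by
  have hs := Real.hasDerivAt_sin θ
  have hc := Real.hasDerivAt_cos θ
  have h : HasDerivAt (fun t => Fham a b c k κ Rr x y t px py pθ)
      ((1/2)*(((-(b^2*(2*(Real.cos θ)^1*(-Real.sin θ))))*(px + k*x/(x^2+y^2))^2
        + (-(b^2*(2*(Real.sin θ)^1*(Real.cos θ))))*(py + k*y/(x^2+y^2))^2
        + 0
        - ((2*b^2*Real.cos θ*(Real.cos θ) + 2*b^2*Real.sin θ*(-Real.sin θ))*(px + k*x/(x^2+y^2)))*(py + k*y/(x^2+y^2))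
        + ((2*a*b*(Real.cos θ))*(px + k*x/(x^2+y^2)))*pθ
        - ((2*a*b*(-Real.sin θ))*(py + k*y/(x^2+y^2)))*pθ) / (a*c-b^2) / a) - 0) θ := by
    unfold Fham
    exact (((((((((hc.pow 2).const_mul (b^2)).const_sub (a*c)).mul_const _).add
      ((((hs.pow 2).const_mul (b^2)).const_sub (a*c)).mul_const _)).add (hasDerivAt_const _ _)).sub
      ((((hs.const_mul (2*b^2)).mul hc).mul_const _).mul_const _)).add
      (((hs.const_mul (2*a*b)).mul_const _).mul_const _)).sub
      (((hc.const_mul (2*a*b)).mul_const _).mul_const _)).div_const (a*c-b^2) |>.div_const a |>.const_mul (1/2) |>.sub (hasDerivAt_const _ _)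
  rw [h.deriv]; ring

lemma Fham_deriv_x (a b c k κ Rr x y θ px py pθ : ℝ)
    (h2 : x^2+y^2 ≠ 0) (h3 : x^2+y^2-Rr^2 ≠ 0) :
    deriv (fun t => Fham a b c k κ Rr t y θ px py pθ) x
      = (((a*c-b^2*(Real.cos θ)^2)*(px + k*x/(x^2+y^2))
         - b^2*Real.sin θ*Real.cos θ*(py + k*y/(x^2+y^2))
         + a*b*Real.sin θ*pθ) / (a*c-b^2) / a) * (k*(y^2-x^2)/(x^2+y^2)^2)
        + (((a*c-b^2*(Real.sin θ)^2)*(py + k*y/(x^2+y^2))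
         - b^2*Real.sin θ*Real.cos θ*(px + k*x/(x^2+y^2))
         - a*b*Real.cos θ*pθ) / (a*c-b^2) / a) * (-(2*k*x*y)/(x^2+y^2)^2)
        - κ*(2*x/(x^2+y^2) - 2*x/(x^2+y^2-Rr^2)) := by
  have hd1 : HasDerivAt (fun t : ℝ => t^2+y^2) (2*x) x := by
    simpa using (hasDerivAt_pow 2 x).add_const (y^2)
  have hu : HasDerivAt (fun t : ℝ => px + k*t/(t^2+y^2))
      ((k*1*(x^2+y^2) - k*x*(2*x))/(x^2+y^2)^2) x :=
    (((hasDerivAt_id x).const_mul k).div hd1 h2).const_add px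
  have hv : HasDerivAt (fun t : ℝ => py + k*y/(t^2+y^2))
      ((0*(x^2+y^2) - k*y*(2*x))/(x^2+y^2)^2) x :=
    ((hasDerivAt_const x (k*y)).div hd1 h2).const_add py
  have hlog1 : HasDerivAt (fun t : ℝ => Real.log (t^2+y^2)) (2*x/(x^2+y^2)) x := hd1.log h2
  have hlog2 : HasDerivAt (fun t : ℝ => Real.log (t^2+y^2-Rr^2)) (2*x/(x^2+y^2-Rr^2)) x :=
    (hd1.sub_const (Rr^2)).log h3
  have h : HasDerivAt (fun t => Fham a b c k κ Rr t y θ px py pθ)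
      ((1/2)*((((a*c-b^2*(Real.cos θ)^2)*(2*(px + k*x/(x^2+y^2))^1*((k*1*(x^2+y^2) - k*x*(2*x))/(x^2+y^2)^2))
        + (a*c-b^2*(Real.sin θ)^2)*(2*(py + k*y/(x^2+y^2))^1*((0*(x^2+y^2) - k*y*(2*x))/(x^2+y^2)^2))
        + 0
        - ((2*b^2*Real.sin θ*Real.cos θ*((k*1*(x^2+y^2) - k*x*(2*x))/(x^2+y^2)^2))*(py + k*y/(x^2+y^2))
           + 2*b^2*Real.sin θ*Real.cos θ*(px + k*x/(x^2+y^2))*((0*(x^2+y^2) - k*y*(2*x))/(x^2+y^2)^2))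
        + (2*a*b*Real.sin θ*((k*1*(x^2+y^2) - k*x*(2*x))/(x^2+y^2)^2))*pθ
        - (2*a*b*Real.cos θ*((0*(x^2+y^2) - k*y*(2*x))/(x^2+y^2)^2))*pθ)) / (a*c-b^2) / a)
        - κ*(2*x/(x^2+y^2) - 2*x/(x^2+y^2-Rr^2))) x := by
    unfold Fham
    exact ((((((((hu.pow 2).const_mul (a*c-b^2*(Real.cos θ)^2)).add
      ((hv.pow 2).const_mul (a*c-b^2*(Real.sin θ)^2))).add (hasDerivAt_const _ _)).sub
      ((hu.const_mul (2*b^2*Real.sin θ*Real.cos θ)).mul hv)).add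
      ((hu.const_mul (2*a*b*Real.sin θ)).mul_const _)).sub
      ((hv.const_mul (2*a*b*Real.cos θ)).mul_const _)).div_const (a*c-b^2) |>.div_const a |>.const_mul (1/2)).sub
      ((hlog1.sub hlog2).const_mul κ)
  rw [h.deriv]; ring

lemma Fham_deriv_y (a b c k κ Rr x y θ px py pθ : ℝ)
    (h2 : x^2+y^2 ≠ 0) (h3 : x^2+y^2-Rr^2 ≠ 0) :
    deriv (fun t => Fham a b c k κ Rr x t θ px py pθ) y
      = (((a*c-b^2*(Real.cos θ)^2)*(px + k*x/(x^2+y^2))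
         - b^2*Real.sin θ*Real.cos θ*(py + k*y/(x^2+y^2))
         + a*b*Real.sin θ*pθ) / (a*c-b^2) / a) * (-(2*k*x*y)/(x^2+y^2)^2)
        + (((a*c-b^2*(Real.sin θ)^2)*(py + k*y/(x^2+y^2))
         - b^2*Real.sin θ*Real.cos θ*(px + k*x/(x^2+y^2))
         - a*b*Real.cos θ*pθ) / (a*c-b^2) / a) * (k*(x^2-y^2)/(x^2+y^2)^2)
        - κ*(2*y/(x^2+y^2) - 2*y/(x^2+y^2-Rr^2)) := by
  have hd1 : HasDerivAt (fun t : ℝ => x^2+t^2) (2*y) y := by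
    simpa using ((hasDerivAt_pow 2 y).const_add (x^2))
  have hu : HasDerivAt (fun t : ℝ => px + k*x/(x^2+t^2))
      ((0*(x^2+y^2) - k*x*(2*y))/(x^2+y^2)^2) y :=
    ((hasDerivAt_const y (k*x)).div hd1 h2).const_add px
  have hv : HasDerivAt (fun t : ℝ => py + k*t/(x^2+t^2))
      ((k*1*(x^2+y^2) - k*y*(2*y))/(x^2+y^2)^2) y :=
    (((hasDerivAt_id y).const_mul k).div hd1 h2).const_add py
  have hlog1 : HasDerivAt (fun t : ℝ => Real.log (x^2+t^2)) (2*y/(x^2+y^2)) y := hd1.log h2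
  have hlog2 : HasDerivAt (fun t : ℝ => Real.log (x^2+t^2-Rr^2)) (2*y/(x^2+y^2-Rr^2)) y :=
    (hd1.sub_const (Rr^2)).log h3
  have h : HasDerivAt (fun t => Fham a b c k κ Rr x t θ px py pθ)
      ((1/2)*((((a*c-b^2*(Real.cos θ)^2)*(2*(px + k*x/(x^2+y^2))^1*((0*(x^2+y^2) - k*x*(2*y))/(x^2+y^2)^2))
        + (a*c-b^2*(Real.sin θ)^2)*(2*(py + k*y/(x^2+y^2))^1*((k*1*(x^2+y^2) - k*y*(2*y))/(x^2+y^2)^2))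
        + 0
        - ((2*b^2*Real.sin θ*Real.cos θ*((0*(x^2+y^2) - k*x*(2*y))/(x^2+y^2)^2))*(py + k*y/(x^2+y^2))
           + 2*b^2*Real.sin θ*Real.cos θ*(px + k*x/(x^2+y^2))*((k*1*(x^2+y^2) - k*y*(2*y))/(x^2+y^2)^2))
        + (2*a*b*Real.sin θ*((0*(x^2+y^2) - k*x*(2*y))/(x^2+y^2)^2))*pθ
        - (2*a*b*Real.cos θ*((k*1*(x^2+y^2) - k*y*(2*y))/(x^2+y^2)^2))*pθ)) / (a*c-b^2) / a)
        - κ*(2*y/(x^2+y^2) - 2*y/(x^2+y^2-Rr^2))) y := by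
    unfold Fham
    exact ((((((((hu.pow 2).const_mul (a*c-b^2*(Real.cos θ)^2)).add
      ((hv.pow 2).const_mul (a*c-b^2*(Real.sin θ)^2))).add (hasDerivAt_const _ _)).sub
      ((hu.const_mul (2*b^2*Real.sin θ*Real.cos θ)).mul hv)).add
      ((hu.const_mul (2*a*b*Real.sin θ)).mul_const _)).sub
      ((hv.const_mul (2*a*b*Real.cos θ)).mul_const _)).div_const (a*c-b^2) |>.div_const a |>.const_mul (1/2)).sub
      ((hlog1.sub hlog2).const_mul κ)
  rw [h.deriv]; ring

lemma final_combine (k κ Rr x y px py gu gv gθ : ℝ)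
    (h2 : x^2+y^2 ≠ 0) (h3 : x^2+y^2-Rr^2 ≠ 0)
    (h4 : (py + k*y/(x^2+y^2))*gu - (px + k*x/(x^2+y^2))*gv - gθ = 0) :
    py*gu - px*gv
      - (-y*(gu*(k*(y^2-x^2)/(x^2+y^2)^2) + gv*(-(2*k*x*y)/(x^2+y^2)^2)
              - κ*(2*x/(x^2+y^2) - 2*x/(x^2+y^2-Rr^2)))
         + x*(gu*(-(2*k*x*y)/(x^2+y^2)^2) + gv*(k*(x^2-y^2)/(x^2+y^2)^2)
              - κ*(2*y/(x^2+y^2) - 2*y/(x^2+y^2-Rr^2)))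
         + gθ) = 0 := by
  have e1 : y*(k*(y^2-x^2)/(x^2+y^2)^2) - x*(-(2*k*x*y)/(x^2+y^2)^2) - k*y/(x^2+y^2) = 0 := by
    field_simp; ring
  have e2 : y*(-(2*k*x*y)/(x^2+y^2)^2) - x*(k*(x^2-y^2)/(x^2+y^2)^2) + k*x/(x^2+y^2) = 0 := by
    field_simp; ring
  have e3 : y*(κ*(2*x/(x^2+y^2) - 2*x/(x^2+y^2-Rr^2)))
      - x*(κ*(2*y/(x^2+y^2) - 2*y/(x^2+y^2-Rr^2))) = 0 := by
    field_simp; ring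
  linear_combination h4 + gu*e1 + gv*e2 - e3

theorem angular_momentum_first_integral
    (mc Ic R ρ q : ℝ) (d : ℝ)
    (hmc : 0 < mc) (hIc : 0 < Ic) (hR : 0 < R) (hρ : 0 < ρ) (hq : 0 < q) (hd : 0 ≤ d)
    (Q : ℝ → Matrix (Fin 3) (Fin 3) ℝ)
    (hQ : ∀ Θ, Q Θ = !![mc + ρ*π*R^2, 0, -mc*d*Real.sin Θ;
                        0, mc + ρ*π*R^2, mc*d*Real.cos Θ;
                        -mc*d*Real.sin Θ, mc*d*Real.cos Θ, Ic + mc*d^2])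
    (hdet : ∀ Θ, (Q Θ).det ≠ 0)
    (H : ℝ → ℝ → ℝ → ℝ → ℝ → ℝ → ℝ)
    (hH : ∀ X Y Θ Px Py Pθ,
      H X Y Θ Px Py Pθ =
        (1/2) * (![Px + ρ*q*R^2*X/(X^2+Y^2), Py + ρ*q*R^2*Y/(X^2+Y^2), Pθ] ⬝ᵥ
          ((Q Θ)⁻¹ *ᵥ ![Px + ρ*q*R^2*X/(X^2+Y^2), Py + ρ*q*R^2*Y/(X^2+Y^2), Pθ]))
        - (ρ*q^2/(4*π)) * (Real.log (X^2+Y^2) - Real.log (X^2+Y^2 - R^2))) :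
    ∀ X Y Θ Px Py Pθ : ℝ, X^2 + Y^2 > R^2 →
      Py * deriv (fun px => H X Y Θ px Py Pθ) Px
      - Px * deriv (fun py => H X Y Θ Px py Pθ) Py
      - (-Y * deriv (fun x => H x Y Θ Px Py Pθ) X
         + X * deriv (fun y => H X y Θ Px Py Pθ) Y
         + deriv (fun θ => H X Y θ Px Py Pθ) Θ) = 0 := by
  intro X Y Θ Px Py Pθ hr
  have hπ : (0:ℝ) < π := Real.pi_pos
  have ha : (0:ℝ) < mc + ρ*π*R^2 := by positivity
  have hk : (0:ℝ) < (mc + ρ*π*R^2)*(Ic + mc*d^2) - (mc*d)^2 := by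
    nlinarith [mul_pos (mul_pos hρ hπ) (pow_pos hR 2), mul_pos hmc hIc,
      mul_nonneg hmc.le (sq_nonneg d)]
  have hr2 : X^2+Y^2 ≠ 0 := ((by positivity : (0:ℝ) < R^2).trans hr).ne'
  have hsub : X^2+Y^2-R^2 ≠ 0 := sub_ne_zero.mpr (ne_of_gt hr)
  have hQinv : ∀ θ, (Q θ)⁻¹ =
      ((mc + ρ*π*R^2)*((mc + ρ*π*R^2)*(Ic + mc*d^2)-(mc*d)^2))⁻¹ •
      !![(mc + ρ*π*R^2)*(Ic + mc*d^2)-(mc*d)^2*(Real.cos θ)^2,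
         -((mc*d)^2*Real.sin θ*Real.cos θ), (mc + ρ*π*R^2)*(mc*d)*Real.sin θ;
         -((mc*d)^2*Real.sin θ*Real.cos θ),
         (mc + ρ*π*R^2)*(Ic + mc*d^2)-(mc*d)^2*(Real.sin θ)^2,
         -((mc + ρ*π*R^2)*(mc*d)*Real.cos θ);
         (mc + ρ*π*R^2)*(mc*d)*Real.sin θ, -((mc + ρ*π*R^2)*(mc*d)*Real.cos θ),
         (mc + ρ*π*R^2)^2] := by
    intro θ
    rw [hQ θ]
    exact Qinv_aux (mc + ρ*π*R^2) mc d (Ic + mc*d^2) θ ha.ne' (ne_of_gt hk)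
  have hHF : ∀ x y θ px py pθ, H x y θ px py pθ =
      Fham (mc + ρ*π*R^2) (mc*d) (Ic + mc*d^2) (ρ*q*R^2) (ρ*q^2/(4*π)) R x y θ px py pθ := by
    intro x y θ px py pθ
    rw [hH, hQinv θ]
    simp [Fham, Matrix.mulVec, dotProduct, Fin.sum_univ_three]
    ring
  simp only [hHF]
  rw [Fham_deriv_px, Fham_deriv_py, Fham_deriv_θ,
    Fham_deriv_x _ _ _ _ _ _ _ _ _ _ _ _ hr2 hsub,
    Fham_deriv_y _ _ _ _ _ _ _ _ _ _ _ _ hr2 hsub]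
  exact final_combine _ _ _ _ _ _ _ _ _ _ hr2 hsub (by ring)
end

section
/- All critical points of the effective potential U_e(x, y) = k²/(2(m(x²+y²) + 2m_c d x + I_c + m_c d²)) + (ρq²/(4π))·ln(1 − R²/(x²+y²)), defined on {(x,y) : x²+y² > R²}, satisfy y = 0, provided d > 0 and k ≠ 0. -/
open Real

theorem critical_points_on_axis
    (mc Ic ρ R q d k : ℝ)
    (hmc : 0 < mc) (hIc : 0 < Ic) (hρ : 0 < ρ) (hR : 0 < R) (hq : 0 < q)
    (hd : 0 < d) (hk : k ≠ 0)
    (m : ℝ) (hm : m = mc + ρ*π*R^2)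
    (hpos : ∀ x y : ℝ, x^2 + y^2 > R^2 →
      0 < m*(x^2+y^2) + 2*mc*d*x + Ic + mc*d^2)
    (Ue : ℝ → ℝ → ℝ)
    (hUe : ∀ x y, Ue x y =
      k^2 / (2*(m*(x^2+y^2) + 2*mc*d*x + Ic + mc*d^2))
        + (ρ*q^2/(4*π)) * Real.log (1 - R^2/(x^2+y^2))) :
    ∀ x y : ℝ, x^2 + y^2 > R^2 →
      deriv (fun x' => Ue x' y) x = 0 →
      deriv (fun y' => Ue x y') y = 0 →
      y = 0 := by
  intro x y hxy hdx hdy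
  by_contra hy
  set S : ℝ := x^2 + y^2 with hSdef
  set Q : ℝ := m*(x^2+y^2) + 2*mc*d*x + Ic + mc*d^2 with hQdef
  have hQ : 0 < Q := hpos x y hxy
  have hQne : Q ≠ 0 := ne_of_gt hQ
  have hS : 0 < S := lt_trans (pow_pos hR 2) hxy
  have hSne : S ≠ 0 := ne_of_gt hS
  have hSR : S - R^2 > 0 := sub_pos.mpr hxy
  have hSRne : S - R^2 ≠ 0 := ne_of_gt hSR
  have hg : (0:ℝ) < 1 - R^2/S := by
    have : R^2/S < 1 := (div_lt_one hS).mpr hxy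
    linarith
  have hgne : 1 - R^2/S ≠ 0 := ne_of_gt hg
  have hπ : (π:ℝ) ≠ 0 := Real.pi_ne_zero
  -- x-derivative
  have hx2 : HasDerivAt (fun x' : ℝ => x'^2 + y^2) (2*x) x := by
    simpa using ((hasDerivAt_pow 2 x).add_const (y^2))
  have hQx : HasDerivAt (fun x' : ℝ => 2*(m*(x'^2+y^2) + 2*mc*d*x' + Ic + mc*d^2))
      (2*(m*(2*x) + 2*mc*d*1)) x := by
    simpa using ((((hx2.const_mul m).add ((hasDerivAt_id x).const_mul (2*mc*d))).add_const Ic).add_const (mc*d^2)).const_mul 2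
  have hdivx : HasDerivAt (fun x' : ℝ => k^2 / (2*(m*(x'^2+y^2) + 2*mc*d*x' + Ic + mc*d^2)))
      ((0 * (2*Q) - k^2 * (2*(m*(2*x) + 2*mc*d*1))) / (2*Q)^2) x := by
    exact (hasDerivAt_const x (k^2)).div hQx (by positivity)
  have hfracx : HasDerivAt (fun x' : ℝ => R^2/(x'^2+y^2)) ((0*S - R^2*(2*x))/S^2) x :=
    (hasDerivAt_const x (R^2)).div hx2 hSne
  have hlogx : HasDerivAt (fun x' : ℝ => (ρ*q^2/(4*π)) * Real.log (1 - R^2/(x'^2+y^2)))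
      ((ρ*q^2/(4*π)) * ((-((0*S - R^2*(2*x))/S^2)) / (1 - R^2/S))) x :=
    ((hfracx.const_sub 1).log hgne).const_mul _
  have hDx : deriv (fun x' => Ue x' y) x
      = (0 * (2*Q) - k^2 * (2*(m*(2*x) + 2*mc*d*1))) / (2*Q)^2
        + (ρ*q^2/(4*π)) * ((-((0*S - R^2*(2*x))/S^2)) / (1 - R^2/S)) := by
    have := (hdivx.add hlogx).deriv
    rw [← this]
    congr 1
    funext x'
    rw [hUe]
    rfl
  -- y-derivative
  have hy2 : HasDerivAt (fun y' : ℝ => x^2 + y'^2) (2*y) y := by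
    simpa using ((hasDerivAt_pow 2 y).const_add (x^2))
  have hQy : HasDerivAt (fun y' : ℝ => 2*(m*(x^2+y'^2) + 2*mc*d*x + Ic + mc*d^2))
      (2*(m*(2*y))) y := by
    simpa using ((((hy2.const_mul m).add_const (2*mc*d*x)).add_const Ic).add_const (mc*d^2)).const_mul 2
  have hdivy : HasDerivAt (fun y' : ℝ => k^2 / (2*(m*(x^2+y'^2) + 2*mc*d*x + Ic + mc*d^2)))
      ((0 * (2*Q) - k^2 * (2*(m*(2*y)))) / (2*Q)^2) y := by
    exact (hasDerivAt_const y (k^2)).div hQy (by positivity)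
  have hfracy : HasDerivAt (fun y' : ℝ => R^2/(x^2+y'^2)) ((0*S - R^2*(2*y))/S^2) y :=
    (hasDerivAt_const y (R^2)).div hy2 hSne
  have hlogy : HasDerivAt (fun y' : ℝ => (ρ*q^2/(4*π)) * Real.log (1 - R^2/(x^2+y'^2)))
      ((ρ*q^2/(4*π)) * ((-((0*S - R^2*(2*y))/S^2)) / (1 - R^2/S))) y :=
    ((hfracy.const_sub 1).log hgne).const_mul _
  have hDy : deriv (fun y' => Ue x y') y
      = (0 * (2*Q) - k^2 * (2*(m*(2*y)))) / (2*Q)^2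
        + (ρ*q^2/(4*π)) * ((-((0*S - R^2*(2*y))/S^2)) / (1 - R^2/S)) := by
    have := (hdivy.add hlogy).deriv
    rw [← this]
    congr 1
    funext y'
    rw [hUe]
    rfl
  -- simplify to nice forms
  have hone : 1 - R^2/S = (S - R^2)/S := by field_simp
  have hEx : -(k^2*(m*x+mc*d))/Q^2 + (ρ*q^2*R^2/(2*π)) * (x*(1/(S*(S-R^2)))) = 0 := by
    rw [hDx, hone] at hdx
    rw [← hdx]
    field_simp
    ring
  have hEy : y * (-(k^2*m)/Q^2 + (ρ*q^2*R^2/(2*π)) * (1/(S*(S-R^2)))) = 0 := by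
    rw [hDy, hone] at hdy
    rw [← hdy]
    field_simp
    ring
  have hB : -(k^2*m)/Q^2 + (ρ*q^2*R^2/(2*π)) * (1/(S*(S-R^2))) = 0 :=
    (mul_eq_zero.mp hEy).resolve_left hy
  have hfin : -(k^2*(mc*d))/Q^2 = 0 := by linear_combination hEx - x*hB
  have : (0:ℝ) < k^2*(mc*d)/Q^2 := by positivity
  rw [neg_div] at hfin
  linarith
end

section
/- For x > R and y = 0, the condition ∂U_e/∂x (x, 0) = 0 for the effective potential U_e is equivalent to a₄x⁴ + a₃x³ + a₂x² + a₁x + a₀ = 0, where a₄ = ρq²R²m²/(2π) − mk², a₃ = 2ρq²R²m m_c d/π − m_c d k², a₂ = (ρq²R²/(2π))(2m(I_c + m_c d²) + 4m_c²d²) + mR²k², a₁ = 2ρq²R²m_c d(I_c + m_c d²)/π + m_c d R²k², a₀ = ρq²R²(I_c + m_c d²)²/(2π). -/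
open Real

theorem critical_point_quartic_equation
    (mc Ic ρ R q d k : ℝ)
    (hmc : 0 < mc) (hIc : 0 < Ic) (hρ : 0 < ρ) (hR : 0 < R) (hq : 0 < q)
    (hd : 0 ≤ d)
    (m : ℝ) (hm : m = mc + ρ*π*R^2)
    (hpos : ∀ x : ℝ, R < x → 0 < m*x^2 + 2*mc*d*x + Ic + mc*d^2)
    (Ue : ℝ → ℝ → ℝ)
    (hUe : ∀ x y, Ue x y =
      k^2 / (2*(m*(x^2+y^2) + 2*mc*d*x + Ic + mc*d^2))
        + (ρ*q^2/(4*π)) * Real.log (1 - R^2/(x^2+y^2))) :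
    ∀ x : ℝ, R < x →
      (deriv (fun x' => Ue x' 0) x = 0 ↔
        (ρ*q^2*R^2*m^2/(2*π) - m*k^2) * x^4
        + (2*ρ*q^2*R^2*m*mc*d/π - mc*d*k^2) * x^3
        + ((ρ*q^2*R^2/(2*π)) * (2*m*(Ic + mc*d^2) + 4*mc^2*d^2) + m*R^2*k^2) * x^2
        + (2*ρ*q^2*R^2*mc*d*(Ic + mc*d^2)/π + mc*d*R^2*k^2) * x
        + ρ*q^2*R^2*(Ic + mc*d^2)^2/(2*π) = 0) := by
  intro x hx
  have hπ : (0:ℝ) < π := Real.pi_pos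
  have hx0 : 0 < x := lt_trans hR hx
  have hx2R : 0 < x^2 - R^2 := by nlinarith
  have hD : 0 < m*x^2 + 2*mc*d*x + Ic + mc*d^2 := hpos x hx
  set D : ℝ := m*x^2 + 2*mc*d*x + Ic + mc*d^2 with hDdef
  have hfeq : (fun x' => Ue x' 0) = fun x' =>
      k^2 / (2*(m*x'^2 + 2*mc*d*x' + (Ic + mc*d^2)))
        + (ρ*q^2/(4*π)) * Real.log (1 - R^2/x'^2) := by
    funext x'
    rw [hUe]
    ring_nf
  rw [hfeq]
  -- derivative of the polynomial denominator
  have hpoly : HasDerivAt (fun x' : ℝ => 2*(m*x'^2 + 2*mc*d*x' + (Ic + mc*d^2)))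
      (2*(m*(2*x) + 2*mc*d)) x := by
    have h1 : HasDerivAt (fun x' : ℝ => m*x'^2 + 2*mc*d*x' + (Ic + mc*d^2))
        (m*(2*x) + 2*mc*d) x := by
      have ha := (hasDerivAt_pow 2 x).const_mul m
      have hb := (hasDerivAt_id x).const_mul (2*mc*d)
      have := (ha.add hb).add_const (Ic + mc*d^2)
      exact this.congr_deriv (by norm_num)
    exact h1.const_mul 2
  have h2D : (2*(m*x^2 + 2*mc*d*x + (Ic + mc*d^2))) ≠ 0 := by
    have : m*x^2 + 2*mc*d*x + (Ic + mc*d^2) = D := by rw [hDdef]; ring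
    rw [this]; positivity
  have hterm1 : HasDerivAt (fun x' : ℝ => k^2 / (2*(m*x'^2 + 2*mc*d*x' + (Ic + mc*d^2))))
      ((0 * (2*(m*x^2 + 2*mc*d*x + (Ic + mc*d^2))) - k^2 * (2*(m*(2*x) + 2*mc*d))) /
        (2*(m*x^2 + 2*mc*d*x + (Ic + mc*d^2)))^2) x :=
    (hasDerivAt_const x (k^2)).div hpoly h2D
  -- derivative of the log part
  have hx2ne : (x:ℝ)^2 ≠ 0 := by positivity
  have hg : HasDerivAt (fun x' : ℝ => 1 - R^2/x'^2)
      (-((0 * x^2 - R^2*(2*x^(2-1)))/(x^2)^2)) x := by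
    have hq2 : HasDerivAt (fun x' : ℝ => R^2/x'^2)
        ((0 * x^2 - R^2*(2*x^(2-1)))/(x^2)^2) x :=
      (hasDerivAt_const x (R^2)).div (hasDerivAt_pow 2 x) hx2ne
    simpa using hq2.const_sub 1
  have hgpos : 0 < 1 - R^2/x^2 := by
    rw [sub_pos, div_lt_one (by positivity)]
    nlinarith
  have hlog : HasDerivAt (fun x' : ℝ => Real.log (1 - R^2/x'^2))
      ((-((0 * x^2 - R^2*(2*x^(2-1)))/(x^2)^2)) / (1 - R^2/x^2)) x :=
    hg.log (ne_of_gt hgpos)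
  have htotal := hterm1.add (hlog.const_mul (ρ*q^2/(4*π)))
  have hderiv : deriv (fun x' => k^2 / (2*(m*x'^2 + 2*mc*d*x' + (Ic + mc*d^2)))
      + (ρ*q^2/(4*π)) * Real.log (1 - R^2/x'^2)) x = _ := htotal.deriv
  rw [hderiv]
  -- now the algebraic equivalence
  set E : ℝ := (0 * (2*(m*x^2 + 2*mc*d*x + (Ic + mc*d^2))) - k^2 * (2*(m*(2*x) + 2*mc*d))) /
        (2*(m*x^2 + 2*mc*d*x + (Ic + mc*d^2)))^2
      + ρ*q^2/(4*π) * ((-((0 * x^2 - R^2*(2*x^(2-1)))/(x^2)^2)) / (1 - R^2/x^2)) with hE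
  have hDne : D ≠ 0 := ne_of_gt hD
  have hxne : x ≠ 0 := ne_of_gt hx0
  have hx2Rne : x^2 - R^2 ≠ 0 := ne_of_gt hx2R
  have hπne : π ≠ 0 := ne_of_gt hπ
  have key : (ρ*q^2*R^2*m^2/(2*π) - m*k^2) * x^4
        + (2*ρ*q^2*R^2*m*mc*d/π - mc*d*k^2) * x^3
        + ((ρ*q^2*R^2/(2*π)) * (2*m*(Ic + mc*d^2) + 4*mc^2*d^2) + m*R^2*k^2) * x^2
        + (2*ρ*q^2*R^2*mc*d*(Ic + mc*d^2)/π + mc*d*R^2*k^2) * x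
        + ρ*q^2*R^2*(Ic + mc*d^2)^2/(2*π)
      = E * (D^2 * (x * (x^2 - R^2)) / (2*π) * (2*π)) := by
    rw [hE]
    have hDD : m*x^2 + 2*mc*d*x + (Ic + mc*d^2) = D := by rw [hDdef]; ring
    rw [hDD]
    have h1mR : (1 - R^2/x^2) = (x^2 - R^2)/x^2 := by field_simp
    rw [h1mR]
    norm_num
    field_simp
    rw [hDdef]
    ring
  constructor
  · intro h
    rw [key, h, zero_mul]
  · intro h
    rw [key] at h
    have hM : (D^2 * (x * (x^2 - R^2)) / (2*π) * (2*π)) ≠ 0 := by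
      have : D^2 * (x * (x^2 - R^2)) / (2*π) * (2*π) = D^2 * (x * (x^2 - R^2)) := by
        field_simp
      rw [this]
      positivity
    exact (mul_eq_zero.mp h).resolve_right hM
end

section
/- Consider the vector field u = −Y ∂/∂X + X ∂/∂Y + ∂/∂Θ − 𝒫y ∂/∂𝒫x + 𝒫x ∂/∂𝒫y on ℝ⁵ (coordinates X, Y, Θ, 𝒫x, 𝒫y). The Hamiltonian H(X, Y, Θ, Px, Py, Pθ) of the unbalanced foil (as defined via the matrix Q(Θ)) is invariant under u: the Lie derivative of H along the Hamiltonian lift of u vanishes, equivalently u is the Hamiltonian vector field of K = Pθ + Py X − Px Y and {K, H} = 0. -/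
open Real Matrix


lemma qd (dD c1 c2 c3 c4 c5 c6 c7 : ℝ) {f g L1 L2 : ℝ → ℝ} {f' g' l1 l2 x : ℝ}
    (hf : HasDerivAt f f' x) (hg : HasDerivAt g g' x)
    (h1 : HasDerivAt L1 l1 x) (h2 : HasDerivAt L2 l2 x) :
    HasDerivAt (fun t => (1/2)*((c1*(f t)^2 + c2*(g t)^2 + c3 + c4*((f t)*(g t)) + c5*(f t) + c6*(g t))/dD)
        - c7*(L1 t - L2 t))
      ((1/2)*((2*c1*(f x)*f' + 2*c2*(g x)*g' + c4*(f'*(g x)+(f x)*g') + c5*f' + c6*g')/dD) - c7*(l1 - l2)) x := by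
  have h := ((((((((hf.pow 2).const_mul c1).add ((hg.pow 2).const_mul c2)).add_const c3).add
      ((hf.mul hg).const_mul c4)).add (hf.const_mul c5)).add (hg.const_mul c6)).div_const dD).const_mul (1/2)
  have h' := h.sub ((h1.sub h2).const_mul c7)
  refine h'.congr_deriv ?_
  ring

lemma td (dD k0 k1 k2 k3 k4 k5 C : ℝ) (θ : ℝ) :
    HasDerivAt (fun t => (1/2)*((k1*(Real.cos t)^2 + k2*(Real.sin t)^2 + k0 + k3*((Real.sin t)*(Real.cos t))
        + k4*(Real.sin t) + k5*(Real.cos t))/dD) - C)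
      ((1/2)*((2*(k2 - k1)*(Real.sin θ)*(Real.cos θ) + k3*((Real.cos θ)^2 - (Real.sin θ)^2)
        + k4*(Real.cos θ) - k5*(Real.sin θ))/dD)) θ := by
  have hs := Real.hasDerivAt_sin θ
  have hc := Real.hasDerivAt_cos θ
  have h := (((((((((hc.pow 2).const_mul k1).add ((hs.pow 2).const_mul k2)).add_const k0).add
      ((hs.mul hc).const_mul k3)).add (hs.const_mul k4)).add (hc.const_mul k5)).div_const dD).const_mul (1/2)).sub_const C
  refine h.congr_deriv ?_
  ring

lemma hder1 (Pc b Y X : ℝ) (h : X^2+Y^2 ≠ 0) :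
    HasDerivAt (fun t => Pc + b*t/(t^2+Y^2)) (b*(Y^2 - X^2)/(X^2+Y^2)^2) X := by
  have hs : HasDerivAt (fun t : ℝ => t^2+Y^2) (2*X) X := by
    simpa using (hasDerivAt_pow 2 X).add_const (Y^2)
  have hb : HasDerivAt (fun t : ℝ => b*t) (b*1) X := (hasDerivAt_id X).const_mul b
  have h2 := (hb.div hs h).const_add Pc
  refine h2.congr_deriv ?_
  field_simp
  ring

lemma hder2 (Pc c Y X : ℝ) (h : X^2+Y^2 ≠ 0) :
    HasDerivAt (fun t => Pc + c/(t^2+Y^2)) (-(2*c*X)/(X^2+Y^2)^2) X := by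
  have hs : HasDerivAt (fun t : ℝ => t^2+Y^2) (2*X) X := by
    simpa using (hasDerivAt_pow 2 X).add_const (Y^2)
  have h2 := ((hasDerivAt_const X c).div hs h).const_add Pc
  refine h2.congr_deriv ?_
  field_simp
  ring

lemma hder3 (Pc c X Y : ℝ) (h : X^2+Y^2 ≠ 0) :
    HasDerivAt (fun t => Pc + c/(X^2+t^2)) (-(2*c*Y)/(X^2+Y^2)^2) Y := by
  have hs : HasDerivAt (fun t : ℝ => X^2+t^2) (2*Y) Y := by
    simpa using (hasDerivAt_pow 2 Y).const_add (X^2)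
  have h2 := ((hasDerivAt_const Y c).div hs h).const_add Pc
  refine h2.congr_deriv ?_
  field_simp
  ring

lemma hder4 (Pc b X Y : ℝ) (h : X^2+Y^2 ≠ 0) :
    HasDerivAt (fun t => Pc + b*t/(X^2+t^2)) (b*(X^2 - Y^2)/(X^2+Y^2)^2) Y := by
  have hs : HasDerivAt (fun t : ℝ => X^2+t^2) (2*Y) Y := by
    simpa using (hasDerivAt_pow 2 Y).const_add (X^2)
  have hb : HasDerivAt (fun t : ℝ => b*t) (b*1) Y := (hasDerivAt_id Y).const_mul b
  have h2 := (hb.div hs h).const_add Pc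
  refine h2.congr_deriv ?_
  field_simp
  ring

lemma hlog1 (Y X : ℝ) (h : X^2+Y^2 ≠ 0) :
    HasDerivAt (fun t => Real.log (t^2+Y^2)) (2*X/(X^2+Y^2)) X := by
  have hs : HasDerivAt (fun t : ℝ => t^2+Y^2) (2*X) X := by
    simpa using (hasDerivAt_pow 2 X).add_const (Y^2)
  exact hs.log h

lemma hlog2 (Y R X : ℝ) (h : X^2+Y^2-R^2 ≠ 0) :
    HasDerivAt (fun t => Real.log (t^2+Y^2-R^2)) (2*X/(X^2+Y^2-R^2)) X := by
  have hs : HasDerivAt (fun t : ℝ => t^2+Y^2-R^2) (2*X) X := by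
    simpa using ((hasDerivAt_pow 2 X).add_const (Y^2)).sub_const (R^2)
  exact hs.log h

lemma hlog3 (X Y : ℝ) (h : X^2+Y^2 ≠ 0) :
    HasDerivAt (fun t => Real.log (X^2+t^2)) (2*Y/(X^2+Y^2)) Y := by
  have hs : HasDerivAt (fun t : ℝ => X^2+t^2) (2*Y) Y := by
    simpa using (hasDerivAt_pow 2 Y).const_add (X^2)
  exact hs.log h

lemma hlog4 (X R Y : ℝ) (h : X^2+Y^2-R^2 ≠ 0) :
    HasDerivAt (fun t => Real.log (X^2+t^2-R^2)) (2*Y/(X^2+Y^2-R^2)) Y := by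
  have hs : HasDerivAt (fun t : ℝ => X^2+t^2-R^2) (2*Y) Y := by
    simpa using ((hasDerivAt_pow 2 Y).const_add (X^2)).sub_const (R^2)
  exact hs.log h


lemma Qinv_formula (m J D mcv dv : ℝ) (hD : D = m*(m*J - (mcv*dv)^2)) (hDne : D ≠ 0) (Θ : ℝ) :
    (!![m, 0, -mcv*dv*Real.sin Θ; 0, m, mcv*dv*Real.cos Θ; -mcv*dv*Real.sin Θ, mcv*dv*Real.cos Θ, J])⁻¹ =
    !![(m*J - (mcv*dv)^2*(Real.cos Θ)^2)/D, (-((mcv*dv)^2*Real.sin Θ*Real.cos Θ))/D, (m*(mcv*dv)*Real.sin Θ)/D;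
       (-((mcv*dv)^2*Real.sin Θ*Real.cos Θ))/D, (m*J - (mcv*dv)^2*(Real.sin Θ)^2)/D, (-(m*(mcv*dv)*Real.cos Θ))/D;
       (m*(mcv*dv)*Real.sin Θ)/D, (-(m*(mcv*dv)*Real.cos Θ))/D, (m^2)/D] := by
  apply Matrix.inv_eq_right_inv
  have hpy := Real.sin_sq_add_cos_sq Θ
  ext i j
  fin_cases i <;> fin_cases j <;> simp [Matrix.mul_apply, Fin.sum_univ_three]
  · field_simp
    linear_combination (-(m*(mcv*dv)^2))*hpy - hD
  · field_simp
    ring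
  · field_simp
    ring
  · field_simp
    ring
  · field_simp
    linear_combination (-(m*(mcv*dv)^2))*hpy - hD
  · field_simp
    ring
  · field_simp
    ring
  · field_simp
    ring
  · field_simp
    linear_combination (-(m*(mcv*dv)^2))*hpy - hD


set_option maxHeartbeats 2000000 in
lemma bracket_id (m a J D b c7 R X Y Px Py Pθ sθ cθ : ℝ)
    (hD : D ≠ 0) (hSne : X^2+Y^2 ≠ 0) (hSR : X^2+Y^2 - R^2 ≠ 0) :
    Py * ((1/2)*((2*(m*J - a^2*cθ^2)*(Px + b*X/(X^2+Y^2))*1 + 2*(m*J - a^2*sθ^2)*(Py + b*Y/(X^2+Y^2))*0 + (-(2*a^2*sθ*cθ))*(1*(Py + b*Y/(X^2+Y^2))+(Px + b*X/(X^2+Y^2))*0) + (2*m*a*sθ*Pθ)*1 + (-(2*m*a*cθ*Pθ))*0)/D) - c7*(0 - 0)) - Px * ((1/2)*((2*(m*J - a^2*cθ^2)*(Px + b*X/(X^2+Y^2))*0 + 2*(m*J - a^2*sθ^2)*(Py + b*Y/(X^2+Y^2))*1 + (-(2*a^2*sθ*cθ))*(0*(Py + b*Y/(X^2+Y^2))+(Px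 + b*X/(X^2+Y^2))*1) + (2*m*a*sθ*Pθ)*0 + (-(2*m*a*cθ*Pθ))*1)/D) - c7*(0 - 0)) - (-Y * ((1/2)*((2*(m*J - a^2*cθ^2)*(Px + b*X/(X^2+Y^2))*(b*(Y^2 - X^2)/(X^2+Y^2)^2) + 2*(m*J - a^2*sθ^2)*(Py + b*Y/(X^2+Y^2))*(-(2*(b*Y)*X)/(X^2+Y^2)^2) + (-(2*a^2*sθ*cθ))*((b*(Y^2 - X^2)/(X^2+Y^2)^2)*(Py + b*Y/(X^2+Y^2))+(Px + b*X/(X^2+Y^2))*(-(2*(b*Y)*X)/(X^2+Y^2)^2)) + (2*m*a*sθ*Pθ)*(b*(Y^2 - X^2)/(X^2+Y^2)^2) + (-(2*m*a*cθ*Pθ))*(-(2*(b*Y)*X)/(X^2+Y^2)^2))/D) - c7*((2*X/(X^2+Y^2)) - (2*X/((X^2+Y^2)-R^2)))) + X * ((1/2)*((2*(m*J - a^2*cθ^2)*(Px + b*X/(X^2+Y^2))*(-(2*(b*X)*Y)/(X^2+Y^2)^2) + 2*(m*J - a^2*sθ^2)*(Py + b*Y/(X^2+Y^2))*(b*(X^2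 - Y^2)/(X^2+Y^2)^2) + (-(2*a^2*sθ*cθ))*((-(2*(b*X)*Y)/(X^2+Y^2)^2)*(Py + b*Y/(X^2+Y^2))+(Px + b*X/(X^2+Y^2))*(b*(X^2 - Y^2)/(X^2+Y^2)^2)) + (2*m*a*sθ*Pθ)*(-(2*(b*X)*Y)/(X^2+Y^2)^2) + (-(2*m*a*cθ*Pθ))*(b*(X^2 - Y^2)/(X^2+Y^2)^2))/D) - c7*((2*Y/(X^2+Y^2)) - (2*Y/((X^2+Y^2)-R^2)))) + ((1/2)*((2*((-(a^2*(Py + b*Y/(X^2+Y^2))^2)) - (-(a^2*(Px + b*X/(X^2+Y^2))^2)))*sθ*cθ + (-(2*a^2*((Px + b*X/(X^2+Y^2))*(Py + b*Y/(X^2+Y^2)))))*(cθ^2 - sθ^2) + (2*m*a*Pθ*(Px + b*X/(X^2+Y^2)))*cθ - (-(2*m*a*Pθ*(Py + b*Y/(X^2+Y^2))))*sθ)/D))) = 0 := by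
  have hcan1 : Y*(b*(Y^2 - X^2)/(X^2+Y^2)^2) - X*(-(2*(b*X)*Y)/(X^2+Y^2)^2) = b*Y/(X^2+Y^2) := by
    field_simp
    ring
  have hcan2 : Y*(-(2*(b*Y)*X)/(X^2+Y^2)^2) - X*(b*(X^2 - Y^2)/(X^2+Y^2)^2) = -(b*X/(X^2+Y^2)) := by
    field_simp
    ring
  linear_combination ((1/2)*((2*(m*J - a^2*cθ^2)*(Px + b*X/(X^2+Y^2)) + (-(2*a^2*sθ*cθ))*(Py + b*Y/(X^2+Y^2)) + (2*m*a*sθ*Pθ))/D)) * hcan1 +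
    ((1/2)*((2*(m*J - a^2*sθ^2)*(Py + b*Y/(X^2+Y^2)) + (-(2*a^2*sθ*cθ))*(Px + b*X/(X^2+Y^2)) + (-(2*m*a*cθ*Pθ)))/D)) * hcan2


set_option maxHeartbeats 2000000 in
theorem symmetry_field_is_hamiltonian_vector_field_of_K
    (mc Ic R ρ q : ℝ) (d : ℝ)
    (hmc : 0 < mc) (hIc : 0 < Ic) (hR : 0 < R) (hρ : 0 < ρ) (hq : 0 < q) (hd : 0 ≤ d)
    (Q : ℝ → Matrix (Fin 3) (Fin 3) ℝ)
    (hQ : ∀ Θ, Q Θ = !![mc + ρ*π*R^2, 0, -mc*d*Real.sin Θ;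
                        0, mc + ρ*π*R^2, mc*d*Real.cos Θ;
                        -mc*d*Real.sin Θ, mc*d*Real.cos Θ, Ic + mc*d^2])
    (hdet : ∀ Θ, (Q Θ).det ≠ 0)
    (H : ℝ → ℝ → ℝ → ℝ → ℝ → ℝ → ℝ)
    (hH : ∀ X Y Θ Px Py Pθ,
      H X Y Θ Px Py Pθ =
        (1/2) * (![Px + ρ*q*R^2*X/(X^2+Y^2), Py + ρ*q*R^2*Y/(X^2+Y^2), Pθ] ⬝ᵥ
          ((Q Θ)⁻¹ *ᵥ ![Px + ρ*q*R^2*X/(X^2+Y^2), Py + ρ*q*R^2*Y/(X^2+Y^2), Pθ]))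
        - (ρ*q^2/(4*π)) * (Real.log (X^2+Y^2) - Real.log (X^2+Y^2 - R^2)))
    (K : ℝ → ℝ → ℝ → ℝ → ℝ → ℝ → ℝ)
    (hK : ∀ X Y Θ Px Py Pθ, K X Y Θ Px Py Pθ = Pθ + Py*X - Px*Y) :
    ∀ X Y Θ Px Py Pθ : ℝ, X^2 + Y^2 > R^2 →
      -- the Hamiltonian vector field of K is the symmetry field
      -- u = -Y ∂X + X ∂Y + ∂Θ - Py ∂Px + Px ∂Py (with zero ∂Pθ-component)
      (deriv (fun px => K X Y Θ px Py Pθ) Px = -Y ∧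
       deriv (fun py => K X Y Θ Px py Pθ) Py = X ∧
       deriv (fun pθ => K X Y Θ Px Py pθ) Pθ = 1 ∧
       - deriv (fun x => K x Y Θ Px Py Pθ) X = -Py ∧
       - deriv (fun y => K X y Θ Px Py Pθ) Y = Px ∧
       - deriv (fun θ => K X Y θ Px Py Pθ) Θ = 0) ∧
      -- H is invariant under u, i.e. {K, H} = 0
      (Py * deriv (fun px => H X Y Θ px Py Pθ) Px
       - Px * deriv (fun py => H X Y Θ Px py Pθ) Py
       - (-Y * deriv (fun x => H x Y Θ Px Py Pθ) X
          + X * deriv (fun y => H X y Θ Px Py Pθ) Y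
          + deriv (fun θ => H X Y θ Px Py Pθ) Θ) = 0) := by
  intro X Y Θ Px Py Pθ hXY
  have hπ := Real.pi_pos
  have hπne : (π:ℝ) ≠ 0 := Real.pi_ne_zero
  have hDne : ((mc + ρ*π*R^2)*((mc + ρ*π*R^2)*(Ic + mc*d^2) - (mc*d)^2)) ≠ 0 := by
    have h0 := hdet 0
    rw [hQ 0] at h0
    intro hc
    apply h0
    rw [Matrix.det_fin_three]
    simp
    linear_combination hc
  have hQinv : ∀ θ, (Q θ)⁻¹ = !![((mc + ρ*π*R^2)*(Ic + mc*d^2) - (mc*d)^2*(Real.cos θ)^2)/((mc + ρ*π*R^2)*((mc + ρ*π*R^2)*(Ic + mc*d^2) - (mc*d)^2)), (-((mc*d)^2*Real.sin θ*Real.cos θ))/((mc + ρ*π*R^2)*((mc + ρ*π*R^2)*(Ic + mc*d^2) - (mc*d)^2)), ((mc + ρ*π*R^2)*(mc*d)*Real.sin θ)/((mc + ρ*π*R^2)*((mc + ρ*π*R^2)*(Ic + mc*d^2) - (mc*d)^2));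
       (-((mc*d)^2*Real.sin θ*Real.cos θ))/((mc + ρ*π*R^2)*((mc + ρ*π*R^2)*(Ic + mc*d^2) - (mc*d)^2)), ((mc + ρ*π*R^2)*(Ic + mc*d^2) - (mc*d)^2*(Real.sin θ)^2)/((mc + ρ*π*R^2)*((mc + ρ*π*R^2)*(Ic + mc*d^2) - (mc*d)^2)), (-((mc + ρ*π*R^2)*(mc*d)*Real.cos θ))/((mc + ρ*π*R^2)*((mc + ρ*π*R^2)*(Ic + mc*d^2) - (mc*d)^2));
       ((mc + ρ*π*R^2)*(mc*d)*Real.sin θ)/((mc + ρ*π*R^2)*((mc + ρ*π*R^2)*(Ic + mc*d^2) - (mc*d)^2)), (-((mc + ρ*π*R^2)*(mc*d)*Real.cos θ))/((mc + ρ*π*R^2)*((mc + ρ*π*R^2)*(Ic + mc*d^2) - (mc*d)^2)), ((mc + ρ*π*R^2)^2)/((mc + ρ*π*R^2)*((mc + ρ*π*R^2)*(Ic + mc*d^2) - (mc*d)^2))] := by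
    intro θ
    rw [hQ θ]
    exact Qinv_formula (mc + ρ*π*R^2) (Ic + mc*d^2) ((mc + ρ*π*R^2)*((mc + ρ*π*R^2)*(Ic + mc*d^2) - (mc*d)^2)) mc d rfl hDne θ
  have hHe : ∀ x1 y1 θ1 px1 py1 pθ1, H x1 y1 θ1 px1 py1 pθ1 =
      (1/2)*((((mc + ρ*π*R^2)*(Ic + mc*d^2) - (mc*d)^2*(Real.cos θ1)^2)*(px1 + (ρ*q*R^2)*x1/(x1^2+y1^2))^2 + ((mc + ρ*π*R^2)*(Ic + mc*d^2) - (mc*d)^2*(Real.sin θ1)^2)*(py1 + (ρ*q*R^2)*y1/(x1^2+y1^2))^2 + ((mc + ρ*π*R^2)^2*pθ1^2) + (-(2*(mc*d)^2*(Real.sin θ1)*(Real.cos θ1)))*((px1 + (ρ*q*R^2)*x1/(x1^2+y1^2))*(py1 + (ρ*q*R^2)*y1/(x1^2+y1^2))) + (2*(mc + ρ*π*R^2)*(mc*d)*(Real.sin θ1)*pθ1)*(px1 + (ρ*q*R^2)*x1/(x1^2+y1^2)) + (-(2*(mc + ρ*π*R^2)*(mc*d)*(Real.cos θ1)*pθ1))*(py1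 + (ρ*q*R^2)*y1/(x1^2+y1^2)))/((mc + ρ*π*R^2)*((mc + ρ*π*R^2)*(Ic + mc*d^2) - (mc*d)^2))) - (ρ*q^2/(4*π))*(Real.log (x1^2+y1^2) - Real.log ((x1^2+y1^2) - R^2)) := by
    intro x1 y1 θ1 px1 py1 pθ1
    rw [hH, hQinv θ1]
    simp [Matrix.mulVec, dotProduct, Fin.sum_univ_three]
    ring
  have hS0 : (0:ℝ) < X^2 + Y^2 := lt_trans (pow_pos hR 2) hXY
  have hSne : X^2 + Y^2 ≠ 0 := ne_of_gt hS0
  have hSRne : X^2 + Y^2 - R^2 ≠ 0 := by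
    have h1 : (0:ℝ) < X^2 + Y^2 - R^2 := by linarith
    exact ne_of_gt h1
  refine ⟨⟨?_, ?_, ?_, ?_, ?_, ?_⟩, ?_⟩
  · rw [show (fun px => K X Y Θ px Py Pθ) = (fun t => Pθ + Py*X - t*Y) from
      funext fun t => hK X Y Θ t Py Pθ]
    exact (((hasDerivAt_id Px).mul_const Y).const_sub (Pθ + Py*X)).deriv.trans (by ring)
  · rw [show (fun py => K X Y Θ Px py Pθ) = (fun t => Pθ + t*X - Px*Y) from
      funext fun t => hK X Y Θ Px t Pθ]
    exact ((((hasDerivAt_id Py).mul_const X).const_add Pθ).sub_const (Px*Y)).deriv.trans (by ring)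
  · rw [show (fun pθ => K X Y Θ Px Py pθ) = (fun t => t + Py*X - Px*Y) from
      funext fun t => hK X Y Θ Px Py t]
    exact (((hasDerivAt_id Pθ).add_const (Py*X)).sub_const (Px*Y)).deriv
  · rw [show (fun x => K x Y Θ Px Py Pθ) = (fun t => Pθ + Py*t - Px*Y) from
      funext fun t => hK t Y Θ Px Py Pθ]
    have h : deriv (fun t => Pθ + Py*t - Px*Y) X = Py :=
      ((((hasDerivAt_id X).const_mul Py).const_add Pθ).sub_const (Px*Y)).deriv.trans (by ring)
    rw [h]
  · rw [show (fun y => K X y Θ Px Py Pθ) = (fun t => Pθ + Py*X - Px*t) from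
      funext fun t => hK X t Θ Px Py Pθ]
    have h : deriv (fun t => Pθ + Py*X - Px*t) Y = -Px :=
      (((hasDerivAt_id Y).const_mul Px).const_sub (Pθ + Py*X)).deriv.trans (by ring)
    rw [h]
    ring
  · rw [show (fun θ => K X Y θ Px Py Pθ) = (fun _ => Pθ + Py*X - Px*Y) from
      funext fun t => hK X Y t Px Py Pθ]
    simp
  · have e1 : (fun px => H X Y Θ px Py Pθ) = (fun t => (1/2)*((((mc + ρ*π*R^2)*(Ic + mc*d^2) - (mc*d)^2*(Real.cos Θ)^2)*(t + (ρ*q*R^2)*X/(X^2+Y^2))^2 + ((mc + ρ*π*R^2)*(Ic + mc*d^2) - (mc*d)^2*(Real.sin Θ)^2)*(Py + (ρ*q*R^2)*Y/(X^2+Y^2))^2 + ((mc + ρ*π*R^2)^2*Pθ^2) + (-(2*(mc*d)^2*(Real.sin Θ)*(Real.cos Θ)))*((t + (ρ*q*R^2)*X/(X^2+Y^2))*(Py + (ρ*q*R^2)*Y/(X^2+Y^2))) + (2*(mc + ρ*π*R^2)*(mc*d)*(Real.sin Θ)*Pθ)*(t + (ρ*q*R^2)*X/(X^2+Y^2)) +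 (-(2*(mc + ρ*π*R^2)*(mc*d)*(Real.cos Θ)*Pθ))*(Py + (ρ*q*R^2)*Y/(X^2+Y^2)))/((mc + ρ*π*R^2)*((mc + ρ*π*R^2)*(Ic + mc*d^2) - (mc*d)^2))) - (ρ*q^2/(4*π))*(Real.log (X^2+Y^2) - Real.log ((X^2+Y^2) - R^2))) :=
      funext fun t => hHe X Y Θ t Py Pθ
    have e2 : (fun py => H X Y Θ Px py Pθ) = (fun t => (1/2)*((((mc + ρ*π*R^2)*(Ic + mc*d^2) - (mc*d)^2*(Real.cos Θ)^2)*(Px + (ρ*q*R^2)*X/(X^2+Y^2))^2 + ((mc + ρ*π*R^2)*(Ic + mc*d^2) - (mc*d)^2*(Real.sin Θ)^2)*(t + (ρ*q*R^2)*Y/(X^2+Y^2))^2 + ((mc + ρ*π*R^2)^2*Pθ^2) + (-(2*(mc*d)^2*(Real.sin Θ)*(Real.cos Θ)))*((Px + (ρ*q*R^2)*X/(X^2+Y^2))*(t + (ρ*q*R^2)*Y/(X^2+Y^2))) + (2*(mc + ρ*π*R^2)*(mc*d)*(Real.sin Θ)*Pθ)*(Px + (ρ*q*R^2)*X/(X^2+Y^2))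 + (-(2*(mc + ρ*π*R^2)*(mc*d)*(Real.cos Θ)*Pθ))*(t + (ρ*q*R^2)*Y/(X^2+Y^2)))/((mc + ρ*π*R^2)*((mc + ρ*π*R^2)*(Ic + mc*d^2) - (mc*d)^2))) - (ρ*q^2/(4*π))*(Real.log (X^2+Y^2) - Real.log ((X^2+Y^2) - R^2))) :=
      funext fun t => hHe X Y Θ Px t Pθ
    have e3 : (fun x => H x Y Θ Px Py Pθ) = (fun t => (1/2)*((((mc + ρ*π*R^2)*(Ic + mc*d^2) - (mc*d)^2*(Real.cos Θ)^2)*(Px + (ρ*q*R^2)*t/(t^2+Y^2))^2 + ((mc + ρ*π*R^2)*(Ic + mc*d^2) - (mc*d)^2*(Real.sin Θ)^2)*(Py + (ρ*q*R^2)*Y/(t^2+Y^2))^2 + ((mc + ρ*π*R^2)^2*Pθ^2) + (-(2*(mc*d)^2*(Real.sin Θ)*(Real.cos Θ)))*((Px + (ρ*q*R^2)*t/(t^2+Y^2))*(Py + (ρ*q*R^2)*Y/(t^2+Y^2))) + (2*(mc + ρ*π*R^2)*(mc*d)*(Real.sin Θ)*Pθ)*(Px + (ρ*q*R^2)*t/(t^2+Y^2))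 + (-(2*(mc + ρ*π*R^2)*(mc*d)*(Real.cos Θ)*Pθ))*(Py + (ρ*q*R^2)*Y/(t^2+Y^2)))/((mc + ρ*π*R^2)*((mc + ρ*π*R^2)*(Ic + mc*d^2) - (mc*d)^2))) - (ρ*q^2/(4*π))*(Real.log (t^2+Y^2) - Real.log ((t^2+Y^2) - R^2))) :=
      funext fun t => hHe t Y Θ Px Py Pθ
    have e4 : (fun y => H X y Θ Px Py Pθ) = (fun t => (1/2)*((((mc + ρ*π*R^2)*(Ic + mc*d^2) - (mc*d)^2*(Real.cos Θ)^2)*(Px + (ρ*q*R^2)*X/(X^2+t^2))^2 + ((mc + ρ*π*R^2)*(Ic + mc*d^2) - (mc*d)^2*(Real.sin Θ)^2)*(Py + (ρ*q*R^2)*t/(X^2+t^2))^2 + ((mc + ρ*π*R^2)^2*Pθ^2) + (-(2*(mc*d)^2*(Real.sin Θ)*(Real.cos Θ)))*((Px + (ρ*q*R^2)*X/(X^2+t^2))*(Py + (ρ*q*R^2)*t/(X^2+t^2))) + (2*(mc + ρ*π*R^2)*(mc*d)*(Real.sin Θ)*Pθ)*(Px + (ρ*q*R^2)*X/(X^2+t^2))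 + (-(2*(mc + ρ*π*R^2)*(mc*d)*(Real.cos Θ)*Pθ))*(Py + (ρ*q*R^2)*t/(X^2+t^2)))/((mc + ρ*π*R^2)*((mc + ρ*π*R^2)*(Ic + mc*d^2) - (mc*d)^2))) - (ρ*q^2/(4*π))*(Real.log (X^2+t^2) - Real.log ((X^2+t^2) - R^2))) :=
      funext fun t => hHe X t Θ Px Py Pθ
    have e5 : (fun θ => H X Y θ Px Py Pθ) = (fun t =>
        (1/2)*(((-((mc*d)^2*(Px + (ρ*q*R^2)*X/(X^2+Y^2))^2))*(Real.cos t)^2 + (-((mc*d)^2*(Py + (ρ*q*R^2)*Y/(X^2+Y^2))^2))*(Real.sin t)^2 + ((mc + ρ*π*R^2)*(Ic + mc*d^2)*((Px + (ρ*q*R^2)*X/(X^2+Y^2))^2+(Py + (ρ*q*R^2)*Y/(X^2+Y^2))^2) + (mc + ρ*π*R^2)^2*Pθ^2) + (-(2*(mc*d)^2*((Px + (ρ*q*R^2)*X/(X^2+Y^2))*(Py + (ρ*q*R^2)*Y/(X^2+Y^2)))))*((Real.sin t)*(Real.cos t))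
        + (2*(mc + ρ*π*R^2)*(mc*d)*Pθ*(Px + (ρ*q*R^2)*X/(X^2+Y^2)))*(Real.sin t) + (-(2*(mc + ρ*π*R^2)*(mc*d)*Pθ*(Py + (ρ*q*R^2)*Y/(X^2+Y^2))))*(Real.cos t))/((mc + ρ*π*R^2)*((mc + ρ*π*R^2)*(Ic + mc*d^2) - (mc*d)^2))) - (ρ*q^2/(4*π))*(Real.log (X^2+Y^2) - Real.log ((X^2+Y^2) - R^2))) := by
      funext t
      rw [hHe X Y t Px Py Pθ]
      ring
    have hdPx : deriv (fun px => H X Y Θ px Py Pθ) Px = (1/2)*((2*((mc + ρ*π*R^2)*(Ic + mc*d^2) - (mc*d)^2*(Real.cos Θ)^2)*(Px + (ρ*q*R^2)*X/(X^2+Y^2))*1 + 2*((mc + ρ*π*R^2)*(Ic + mc*d^2) - (mc*d)^2*(Real.sin Θ)^2)*(Py + (ρ*q*R^2)*Y/(X^2+Y^2))*0 + (-(2*(mc*d)^2*(Real.sin Θ)*(Real.cos Θ)))*(1*(Py + (ρ*q*R^2)*Y/(X^2+Y^2))+(Px + (ρ*q*R^2)*X/(X^2+Y^2))*0) + (2*(mc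 + ρ*π*R^2)*(mc*d)*(Real.sin Θ)*Pθ)*1 + (-(2*(mc + ρ*π*R^2)*(mc*d)*(Real.cos Θ)*Pθ))*0)/((mc + ρ*π*R^2)*((mc + ρ*π*R^2)*(Ic + mc*d^2) - (mc*d)^2))) - (ρ*q^2/(4*π))*(0 - 0) := by
      rw [e1]
      exact (qd ((mc + ρ*π*R^2)*((mc + ρ*π*R^2)*(Ic + mc*d^2) - (mc*d)^2)) ((mc + ρ*π*R^2)*(Ic + mc*d^2) - (mc*d)^2*(Real.cos Θ)^2) ((mc + ρ*π*R^2)*(Ic + mc*d^2) - (mc*d)^2*(Real.sin Θ)^2) ((mc + ρ*π*R^2)^2*Pθ^2) (-(2*(mc*d)^2*(Real.sin Θ)*(Real.cos Θ))) (2*(mc + ρ*π*R^2)*(mc*d)*(Real.sin Θ)*Pθ) (-(2*(mc + ρ*π*R^2)*(mc*d)*(Real.cos Θ)*Pθ)) (ρ*q^2/(4*π))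
        ((hasDerivAt_id Px).add_const ((ρ*q*R^2)*X/(X^2+Y^2)))
        (hasDerivAt_const Px (Py + (ρ*q*R^2)*Y/(X^2+Y^2)))
        (hasDerivAt_const Px (Real.log (X^2+Y^2)))
        (hasDerivAt_const Px (Real.log ((X^2+Y^2) - R^2)))).deriv
    have hdPy : deriv (fun py => H X Y Θ Px py Pθ) Py = (1/2)*((2*((mc + ρ*π*R^2)*(Ic + mc*d^2) - (mc*d)^2*(Real.cos Θ)^2)*(Px + (ρ*q*R^2)*X/(X^2+Y^2))*0 + 2*((mc + ρ*π*R^2)*(Ic + mc*d^2) - (mc*d)^2*(Real.sin Θ)^2)*(Py + (ρ*q*R^2)*Y/(X^2+Y^2))*1 + (-(2*(mc*d)^2*(Real.sin Θ)*(Real.cos Θ)))*(0*(Py + (ρ*q*R^2)*Y/(X^2+Y^2))+(Px + (ρ*q*R^2)*X/(X^2+Y^2))*1) + (2*(mc + ρ*π*R^2)*(mc*d)*(Real.sin Θ)*Pθ)*0 + (-(2*(mc + ρ*π*R^2)*(mc*d)*(Real.cos Θ)*Pθ))*1)/((mc + ρ*π*R^2)*((mc + ρ*π*R^2)*(Ic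 + mc*d^2) - (mc*d)^2))) - (ρ*q^2/(4*π))*(0 - 0) := by
      rw [e2]
      exact (qd ((mc + ρ*π*R^2)*((mc + ρ*π*R^2)*(Ic + mc*d^2) - (mc*d)^2)) ((mc + ρ*π*R^2)*(Ic + mc*d^2) - (mc*d)^2*(Real.cos Θ)^2) ((mc + ρ*π*R^2)*(Ic + mc*d^2) - (mc*d)^2*(Real.sin Θ)^2) ((mc + ρ*π*R^2)^2*Pθ^2) (-(2*(mc*d)^2*(Real.sin Θ)*(Real.cos Θ))) (2*(mc + ρ*π*R^2)*(mc*d)*(Real.sin Θ)*Pθ) (-(2*(mc + ρ*π*R^2)*(mc*d)*(Real.cos Θ)*Pθ)) (ρ*q^2/(4*π))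
        (hasDerivAt_const Py (Px + (ρ*q*R^2)*X/(X^2+Y^2)))
        ((hasDerivAt_id Py).add_const ((ρ*q*R^2)*Y/(X^2+Y^2)))
        (hasDerivAt_const Py (Real.log (X^2+Y^2)))
        (hasDerivAt_const Py (Real.log ((X^2+Y^2) - R^2)))).deriv
    have hdX : deriv (fun x => H x Y Θ Px Py Pθ) X = (1/2)*((2*((mc + ρ*π*R^2)*(Ic + mc*d^2) - (mc*d)^2*(Real.cos Θ)^2)*(Px + (ρ*q*R^2)*X/(X^2+Y^2))*((ρ*q*R^2)*(Y^2 - X^2)/(X^2+Y^2)^2) + 2*((mc + ρ*π*R^2)*(Ic + mc*d^2) - (mc*d)^2*(Real.sin Θ)^2)*(Py + (ρ*q*R^2)*Y/(X^2+Y^2))*(-(2*((ρ*q*R^2)*Y)*X)/(X^2+Y^2)^2) + (-(2*(mc*d)^2*(Real.sin Θ)*(Real.cos Θ)))*(((ρ*q*R^2)*(Y^2 - X^2)/(X^2+Y^2)^2)*(Py + (ρ*q*R^2)*Y/(X^2+Y^2))+(Px + (ρ*q*R^2)*X/(X^2+Y^2))*(-(2*((ρ*q*R^2)*Y)*X)/(X^2+Y^2)^2))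 + (2*(mc + ρ*π*R^2)*(mc*d)*(Real.sin Θ)*Pθ)*((ρ*q*R^2)*(Y^2 - X^2)/(X^2+Y^2)^2) + (-(2*(mc + ρ*π*R^2)*(mc*d)*(Real.cos Θ)*Pθ))*(-(2*((ρ*q*R^2)*Y)*X)/(X^2+Y^2)^2))/((mc + ρ*π*R^2)*((mc + ρ*π*R^2)*(Ic + mc*d^2) - (mc*d)^2))) - (ρ*q^2/(4*π))*((2*X/(X^2+Y^2)) - (2*X/((X^2+Y^2)-R^2))) := by
      rw [e3]
      exact (qd ((mc + ρ*π*R^2)*((mc + ρ*π*R^2)*(Ic + mc*d^2) - (mc*d)^2)) ((mc + ρ*π*R^2)*(Ic + mc*d^2) - (mc*d)^2*(Real.cos Θ)^2) ((mc + ρ*π*R^2)*(Ic + mc*d^2) - (mc*d)^2*(Real.sin Θ)^2) ((mc + ρ*π*R^2)^2*Pθ^2) (-(2*(mc*d)^2*(Real.sin Θ)*(Real.cos Θ))) (2*(mc + ρ*π*R^2)*(mc*d)*(Real.sin Θ)*Pθ) (-(2*(mc + ρ*π*R^2)*(mc*d)*(Real.cos Θ)*Pθ)) (ρ*q^2/(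4*π))
        (hder1 Px (ρ*q*R^2) Y X hSne)
        (hder2 Py ((ρ*q*R^2)*Y) Y X hSne)
        (hlog1 Y X hSne)
        (hlog2 Y R X hSRne)).deriv
    have hdY : deriv (fun y => H X y Θ Px Py Pθ) Y = (1/2)*((2*((mc + ρ*π*R^2)*(Ic + mc*d^2) - (mc*d)^2*(Real.cos Θ)^2)*(Px + (ρ*q*R^2)*X/(X^2+Y^2))*(-(2*((ρ*q*R^2)*X)*Y)/(X^2+Y^2)^2) + 2*((mc + ρ*π*R^2)*(Ic + mc*d^2) - (mc*d)^2*(Real.sin Θ)^2)*(Py + (ρ*q*R^2)*Y/(X^2+Y^2))*((ρ*q*R^2)*(X^2 - Y^2)/(X^2+Y^2)^2) + (-(2*(mc*d)^2*(Real.sin Θ)*(Real.cos Θ)))*((-(2*((ρ*q*R^2)*X)*Y)/(X^2+Y^2)^2)*(Py + (ρ*q*R^2)*Y/(X^2+Y^2))+(Px + (ρ*q*R^2)*X/(X^2+Y^2))*((ρ*q*R^2)*(X^2 - Y^2)/(X^2+Y^2)^2)) + (2*(mc + ρ*π*R^2)*(mc*d)*(Real.sin Θ)*Pθ)*(-(2*((ρ*q*R^2)*X)*Y)/(X^2+Y^2)^2)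 + (-(2*(mc + ρ*π*R^2)*(mc*d)*(Real.cos Θ)*Pθ))*((ρ*q*R^2)*(X^2 - Y^2)/(X^2+Y^2)^2))/((mc + ρ*π*R^2)*((mc + ρ*π*R^2)*(Ic + mc*d^2) - (mc*d)^2))) - (ρ*q^2/(4*π))*((2*Y/(X^2+Y^2)) - (2*Y/((X^2+Y^2)-R^2))) := by
      rw [e4]
      exact (qd ((mc + ρ*π*R^2)*((mc + ρ*π*R^2)*(Ic + mc*d^2) - (mc*d)^2)) ((mc + ρ*π*R^2)*(Ic + mc*d^2) - (mc*d)^2*(Real.cos Θ)^2) ((mc + ρ*π*R^2)*(Ic + mc*d^2) - (mc*d)^2*(Real.sin Θ)^2) ((mc + ρ*π*R^2)^2*Pθ^2) (-(2*(mc*d)^2*(Real.sin Θ)*(Real.cos Θ))) (2*(mc + ρ*π*R^2)*(mc*d)*(Real.sin Θ)*Pθ) (-(2*(mc + ρ*π*R^2)*(mc*d)*(Real.cos Θ)*Pθ)) (ρ*q^2/(4*π))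
        (hder3 Px ((ρ*q*R^2)*X) X Y hSne)
        (hder4 Py (ρ*q*R^2) X Y hSne)
        (hlog3 X Y hSne)
        (hlog4 X R Y hSRne)).deriv
    have hdT : deriv (fun θ => H X Y θ Px Py Pθ) Θ = (1/2)*((2*((-((mc*d)^2*(Py + (ρ*q*R^2)*Y/(X^2+Y^2))^2)) - (-((mc*d)^2*(Px + (ρ*q*R^2)*X/(X^2+Y^2))^2)))*(Real.sin Θ)*(Real.cos Θ) + (-(2*(mc*d)^2*((Px + (ρ*q*R^2)*X/(X^2+Y^2))*(Py + (ρ*q*R^2)*Y/(X^2+Y^2)))))*((Real.cos Θ)^2 - (Real.sin Θ)^2) + (2*(mc + ρ*π*R^2)*(mc*d)*Pθ*(Px + (ρ*q*R^2)*X/(X^2+Y^2)))*(Real.cos Θ) - (-(2*(mc + ρ*π*R^2)*(mc*d)*Pθ*(Py + (ρ*q*R^2)*Y/(X^2+Y^2))))*(Real.sin Θ))/((mc + ρ*π*R^2)*((mc + ρ*π*R^2)*(Ic + mc*d^2) - (mc*d)^2))) := by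
      rw [e5]
      exact (td ((mc + ρ*π*R^2)*((mc + ρ*π*R^2)*(Ic + mc*d^2) - (mc*d)^2)) ((mc + ρ*π*R^2)*(Ic + mc*d^2)*((Px + (ρ*q*R^2)*X/(X^2+Y^2))^2+(Py + (ρ*q*R^2)*Y/(X^2+Y^2))^2) + (mc + ρ*π*R^2)^2*Pθ^2) (-((mc*d)^2*(Px + (ρ*q*R^2)*X/(X^2+Y^2))^2)) (-((mc*d)^2*(Py + (ρ*q*R^2)*Y/(X^2+Y^2))^2)) (-(2*(mc*d)^2*((Px + (ρ*q*R^2)*X/(X^2+Y^2))*(Py + (ρ*q*R^2)*Y/(X^2+Y^2))))) (2*(mc + ρ*π*R^2)*(mc*d)*Pθ*(Px + (ρ*q*R^2)*X/(X^2+Y^2))) (-(2*(mc + ρ*π*R^2)*(mc*d)*Pθ*(Py + (ρ*q*R^2)*Y/(X^2+Y^2))))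
        ((ρ*q^2/(4*π))*(Real.log (X^2+Y^2) - Real.log ((X^2+Y^2) - R^2))) Θ).deriv
    rw [hdPx, hdPy, hdX, hdY, hdT]
    exact bracket_id (mc + ρ*π*R^2) (mc*d) (Ic + mc*d^2) ((mc + ρ*π*R^2)*((mc + ρ*π*R^2)*(Ic + mc*d^2) - (mc*d)^2)) (ρ*q*R^2) (ρ*q^2/(4*π)) R X Y Px Py Pθ (Real.sin Θ) (Real.cos Θ) hDne hSne hSRne
end

section
/- lim_{s→∞} U(s) = 0 for the effective potential U(s) = f²/(2ms²) + (ρq²/(4π))·ln(1 − R²/s²), and if f > f_cr then U(s₀) > 0 where s₀ is the maximum point; consequently for every energy level 0 < h < U(s₀) the set {s > R : U(s) < h} has exactly two connected components (separated by an interval around s₀ where U ≥ h). -/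
open Real Filter Set
open Topology

theorem effective_potential_sublevel_two_components
    (m ρ R q f : ℝ) (hm : 0 < m) (hρ : 0 < ρ) (hR : 0 < R) (hq : 0 < q)
    (hf : |q| * R * Real.sqrt (ρ*m/(2*π)) < f)
    (U : ℝ → ℝ)
    (hU : ∀ s, U s = f^2/(2*m*s^2) + (ρ*q^2/(4*π)) * Real.log (1 - R^2/s^2))
    (s₀ : ℝ) (hs₀ : s₀ = R * f * Real.sqrt (2*π / (2*π*f^2 - ρ*m*q^2*R^2))) :
    Tendsto U atTop (nhds 0) ∧
    0 < U s₀ ∧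
    ∀ h : ℝ, 0 < h → h < U s₀ →
      ∃ a b : ℝ, R < a ∧ a < s₀ ∧ s₀ < b ∧
        {s : ℝ | R < s ∧ U s < h} = Set.Ioo R a ∪ Set.Ioi b := by
  have hπ : (0:ℝ) < π := Real.pi_pos
  have hfpos : 0 < f := lt_of_le_of_lt (by positivity) hf
  have hD : 0 < 2*π*f^2 - ρ*m*q^2*R^2 := by
    have h1 : (|q| * R * Real.sqrt (ρ*m/(2*π)))^2 < f^2 :=
      pow_lt_pow_left₀ hf (by positivity) two_ne_zero
    rw [mul_pow, mul_pow, sq_abs, Real.sq_sqrt (by positivity)] at h1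
    have h2 : q^2 * R^2 * (ρ*m/(2*π)) * (2*π) < f^2 * (2*π) := by nlinarith
    have h3 : q^2 * R^2 * (ρ*m/(2*π)) * (2*π) = ρ*m*q^2*R^2 := by
      field_simp
    rw [h3] at h2
    linarith
  have hs₀sq : s₀^2 = 2*π*R^2*f^2/(2*π*f^2 - ρ*m*q^2*R^2) := by
    rw [hs₀, mul_pow, mul_pow, Real.sq_sqrt (by positivity)]
    ring
  have hs₀pos : 0 < s₀ := by
    rw [hs₀]
    have : 0 < Real.sqrt (2*π / (2*π*f^2 - ρ*m*q^2*R^2)) :=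
      Real.sqrt_pos.mpr (by positivity)
    positivity
  have hRs₀ : R < s₀ := by
    have h2 : R^2 < s₀^2 := by
      rw [hs₀sq]
      rw [lt_div_iff₀ hD]
      have : 0 < ρ*m*q^2*R^2*R^2 := by positivity
      nlinarith
    exact lt_of_pow_lt_pow_left₀ 2 hs₀pos.le h2
  -- U equals composed form
  have hUV : U = fun s => f^2/(2*m) * (s^2)⁻¹ +
      (ρ*q^2/(4*π)) * Real.log (1 - R^2 * (s^2)⁻¹) := by
    funext s
    rw [hU, div_eq_mul_inv (R^2), ← div_eq_mul_inv (f^2/(2*m))]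
    congr 1
    ring
  -- derivative
  have hder : ∀ s, R < s → HasDerivAt U
      ((2*π*f^2 - ρ*m*q^2*R^2) * (s₀^2 - s^2) / (2*π*m*s^3*(s^2-R^2))) s := by
    intro s hs
    have hspos : 0 < s := lt_trans hR hs
    have hs2 : (s:ℝ)^2 ≠ 0 := by positivity
    have hR2s2 : R^2 < s^2 := by nlinarith
    have hpow : HasDerivAt (fun x : ℝ => x^2) (2*s) s := by
      simpa using hasDerivAt_pow 2 s
    have hinv : HasDerivAt (fun x : ℝ => (x^2)⁻¹) (-(2*s) / (s^2)^2) s := hpow.inv hs2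
    have h1 : HasDerivAt (fun x : ℝ => f^2/(2*m) * (x^2)⁻¹)
        (f^2/(2*m) * (-(2*s)/(s^2)^2)) s := hinv.const_mul _
    have hgpos : 0 < 1 - R^2 * (s^2)⁻¹ := by
      rw [sub_pos, ← div_eq_mul_inv, div_lt_one (by positivity)]
      exact hR2s2
    have hg : HasDerivAt (fun x : ℝ => 1 - R^2 * (x^2)⁻¹)
        (-(R^2 * (-(2*s)/(s^2)^2))) s := (hinv.const_mul (R^2)).const_sub 1
    have hlog : HasDerivAt (fun x : ℝ => Real.log (1 - R^2 * (x^2)⁻¹))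
        ((-(R^2 * (-(2*s)/(s^2)^2))) / (1 - R^2 * (s^2)⁻¹)) s := hg.log (ne_of_gt hgpos)
    have hsum := h1.add (hlog.const_mul (ρ*q^2/(4*π)))
    rw [hUV]
    refine HasDerivAt.congr_deriv hsum ?_
    have h5 : 2*π*f^2 - ρ*m*q^2*R^2 ≠ 0 := ne_of_gt hD
    rw [mul_sub, hs₀sq, mul_div_cancel₀ _ h5]
    have h3 : s^2 - R^2 ≠ 0 := ne_of_gt (by linarith)
    have h4 : (1 - R^2 * (s^2)⁻¹) ≠ 0 := ne_of_gt hgpos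
    field_simp
    ring
  have hcontAt : ∀ s, R < s → ContinuousAt U s := fun s hs => (hder s hs).continuousAt
  have hmono : StrictMonoOn U (Ioc R s₀) := by
    apply strictMonoOn_of_deriv_pos (convex_Ioc R s₀)
    · exact fun s hs => (hcontAt s hs.1).continuousWithinAt
    · intro s hs
      rw [interior_Ioc] at hs
      rw [(hder s hs.1).deriv]
      have hspos : 0 < s := lt_trans hR hs.1
      have h1 : s^2 < s₀^2 := pow_lt_pow_left₀ hs.2 hspos.le two_ne_zero
      have h2 : R^2 < s^2 := pow_lt_pow_left₀ hs.1 hR.le two_ne_zero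
      exact div_pos (mul_pos hD (by linarith))
        (mul_pos (mul_pos (mul_pos (mul_pos two_pos hπ) hm) (pow_pos hspos 3))
          (by linarith))
  have hanti : StrictAntiOn U (Ici s₀) := by
    apply strictAntiOn_of_deriv_neg (convex_Ici s₀)
    · exact fun s hs => (hcontAt s (lt_of_lt_of_le hRs₀ hs)).continuousWithinAt
    · intro s hs
      rw [interior_Ici] at hs
      have hsR : R < s := lt_trans hRs₀ hs
      have hspos : 0 < s := lt_trans hR hsR
      rw [(hder s hsR).deriv]
      have h1 : s₀^2 < s^2 := pow_lt_pow_left₀ hs hs₀pos.le two_ne_zero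
      exact div_neg_of_neg_of_pos (mul_neg_of_pos_of_neg hD (by linarith))
        (mul_pos (mul_pos (mul_pos (mul_pos two_pos hπ) hm) (pow_pos hspos 3))
          (by nlinarith))
  -- tendsto at top
  have htop : Tendsto U atTop (nhds 0) := by
    rw [hUV]
    have t1 : Tendsto (fun s : ℝ => (s^2)⁻¹) atTop (nhds 0) :=
      tendsto_inv_atTop_zero.comp (tendsto_pow_atTop two_ne_zero)
    have t2 : Tendsto (fun s : ℝ => f^2/(2*m) * (s^2)⁻¹) atTop (nhds 0) := by
      simpa using t1.const_mul (f^2/(2*m))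
    have t3 : Tendsto (fun s : ℝ => 1 - R^2 * (s^2)⁻¹) atTop (nhds 1) := by
      have := (t1.const_mul (R^2)).const_sub 1
      simpa using this
    have t4 : Tendsto (fun s : ℝ => Real.log (1 - R^2 * (s^2)⁻¹)) atTop (nhds 0) := by
      have := (Real.continuousAt_log one_ne_zero).tendsto.comp t3
      simpa [Function.comp_def] using this
    have t5 := t2.add (t4.const_mul (ρ*q^2/(4*π)))
    simpa using t5
  -- U s₀ > 0
  have hUs₀ : 0 < U s₀ := by
    have ht : U (s₀+1) < U s₀ :=
      hanti (mem_Ici.mpr le_rfl) (mem_Ici.mpr (by linarith)) (by linarith)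
    have h0 : 0 ≤ U (s₀+1) := by
      apply le_of_tendsto htop
      filter_upwards [eventually_gt_atTop (s₀+1)] with x hx
      exact (hanti (mem_Ici.mpr (by linarith)) (mem_Ici.mpr (by linarith)) hx).le
    linarith
  refine ⟨htop, hUs₀, ?_⟩
  intro h h0 hhU
  -- tendsto at R from the right to -bot
  have hbot : Tendsto U (𝓝[>] R) atBot := by
    rw [hUV]
    have t1 : Tendsto (fun s : ℝ => 1 - R^2 * (s^2)⁻¹) (𝓝[>] R) (𝓝[>] 0) := by
      rw [tendsto_nhdsWithin_iff]
      constructor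
      · have : ContinuousAt (fun s : ℝ => 1 - R^2 * (s^2)⁻¹) R := by
          have : (R:ℝ)^2 ≠ 0 := by positivity
          fun_prop (disch := assumption)
        have h2 := this.tendsto.mono_left (nhdsWithin_le_nhds (s := Ioi R))
        have h3 : 1 - R^2 * ((R:ℝ)^2)⁻¹ = 0 := by field_simp; ring
        rwa [h3] at h2
      · filter_upwards [self_mem_nhdsWithin] with s hs
        have hspos : 0 < s := lt_trans hR hs
        rw [mem_Ioi, sub_pos, ← div_eq_mul_inv, div_lt_one (by positivity)]
        exact pow_lt_pow_left₀ (mem_Ioi.mp hs) hR.le two_ne_zero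
    have t2 : Tendsto (fun s : ℝ => Real.log (1 - R^2 * (s^2)⁻¹)) (𝓝[>] R) atBot :=
      Real.tendsto_log_nhdsGT_zero.comp t1
    have t3 : Tendsto (fun s : ℝ => (ρ*q^2/(4*π)) * Real.log (1 - R^2 * (s^2)⁻¹))
        (𝓝[>] R) atBot := t2.const_mul_atBot (by positivity)
    have t4 : Tendsto (fun s : ℝ => f^2/(2*m) * (s^2)⁻¹) (𝓝[>] R)
        (𝓝 (f^2/(2*m) * ((R:ℝ)^2)⁻¹)) := by
      have : ContinuousAt (fun s : ℝ => f^2/(2*m) * (s^2)⁻¹) R := by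
        have : (R:ℝ)^2 ≠ 0 := by positivity
        fun_prop (disch := assumption)
      exact this.tendsto.mono_left (nhdsWithin_le_nhds (s := Ioi R))
    exact t4.add_atBot t3
  -- pick s₁
  have hmem : ∀ᶠ x in 𝓝[>] R, x ∈ Ioo R s₀ :=
    eventually_of_mem (Ioo_mem_nhdsGT_of_mem ⟨le_refl R, hRs₀⟩) (fun x hx => hx)
  obtain ⟨s₁, hs₁lt, hs₁Ioo⟩ :=
    ((hbot.eventually (eventually_lt_atBot h)).and hmem).exists
  -- pick s₂
  obtain ⟨s₂, hs₂lt, hs₂gt⟩ :=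
    ((htop.eventually_lt_const h0).and (eventually_gt_atTop s₀)).exists
  -- IVT for a
  have hcont1 : ContinuousOn U (Icc s₁ s₀) := fun s hs =>
    (hcontAt s (lt_of_lt_of_le hs₁Ioo.1 hs.1)).continuousWithinAt
  obtain ⟨a, haIoo, haU⟩ := intermediate_value_Ioo hs₁Ioo.2.le hcont1 ⟨hs₁lt, hhU⟩
  have hcont2 : ContinuousOn U (Icc s₀ s₂) := fun s hs =>
    (hcontAt s (lt_of_lt_of_le hRs₀ hs.1)).continuousWithinAt
  obtain ⟨b, hbIoo, hbU⟩ := intermediate_value_Ioo' hs₂gt.le hcont2 ⟨hs₂lt, hhU⟩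
  have haR : R < a := lt_trans hs₁Ioo.1 haIoo.1
  refine ⟨a, b, haR, haIoo.2, hbIoo.1, ?_⟩
  ext s
  simp only [mem_setOf_eq, mem_union, mem_Ioo, mem_Ioi]
  constructor
  · rintro ⟨hRs, hUs⟩
    by_cases hsa : s < a
    · exact Or.inl ⟨hRs, hsa⟩
    · push_neg at hsa
      right
      by_contra hsb
      push_neg at hsb
      rcases le_or_gt s s₀ with hss₀ | hss₀
      · have := hmono.monotoneOn ⟨haR, haIoo.2.le⟩ ⟨hRs, hss₀⟩ hsa
        rw [haU] at this
        linarith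
      · have := hanti.antitoneOn (mem_Ici.mpr hss₀.le) (mem_Ici.mpr hbIoo.1.le) hsb
        rw [hbU] at this
        linarith
  · rintro (⟨h1, h2⟩ | h1)
    · refine ⟨h1, ?_⟩
      have := hmono ⟨h1, by linarith [haIoo.2]⟩ ⟨haR, haIoo.2.le⟩ h2
      rwa [haU] at this
    · have hs₀s : s₀ < s := lt_trans hbIoo.1 h1
      refine ⟨lt_trans hRs₀ hs₀s, ?_⟩
      have := hanti (mem_Ici.mpr hbIoo.1.le) (mem_Ici.mpr hs₀s.le) h1
      rwa [hbU] at this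
end
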